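/- arXiv:math/9901076 — 6 statements merged into one kernel-verified Lean document; each statement's English description precedes it below -/
import Mathlib

section
/- Let g and h be invertible N×N complex matrices. Suppose g = u * exp(a) and g h = w * exp(b), where u, w are unitary matrices and a, b are Hermitian matrices. Let C = max(‖h‖_op, ‖h⁻¹‖_op), so C ≥ 1. Then N^{-1/2} ‖b‖_F − log C ≤ ‖a‖_F ≤ N^{1/2} (‖b‖_F + log C), where ‖·‖_F denotes the Frobenius norm (‖a‖_F = (Tr(a aᴴ))^{1/2}). -/
/-- The Frobenius norm of a complex matrix: `‖a‖_F = (Tr (a aᴴ))^(1/2)`. -/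
noncomputable def frobNorm {N : ℕ} (a : Matrix (Fin N) (Fin N) ℂ) : ℝ :=
  Real.sqrt (Matrix.trace (a * a.conjTranspose)).re

open scoped Matrix.Norms.L2Operator

namespace FrobAux

variable {N : ℕ}

lemma le_norm_diagonal (d : Fin N → ℂ) (i : Fin N) : ‖d i‖ ≤ ‖Matrix.diagonal d‖ := by
  have key : Matrix.toEuclideanCLM (𝕜 := ℂ) (Matrix.diagonal d) (EuclideanSpace.single i 1)
      = EuclideanSpace.single i (d i) := by
    apply (WithLp.equiv 2 _).injective
    simp [Matrix.ofLp_toEuclideanCLM, Matrix.toLin'_apply]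
  calc ‖d i‖ = ‖EuclideanSpace.single (𝕜 := ℂ) i (d i)‖ := (EuclideanSpace.norm_single i _).symm
    _ = ‖Matrix.toEuclideanCLM (𝕜 := ℂ) (Matrix.diagonal d) (EuclideanSpace.single i 1)‖ := by
        rw [key]
    _ ≤ ‖Matrix.toEuclideanCLM (𝕜 := ℂ) (Matrix.diagonal d)‖
          * ‖EuclideanSpace.single (𝕜 := ℂ) i (1:ℂ)‖ :=
        ContinuousLinearMap.le_opNorm _ _
    _ = ‖Matrix.diagonal d‖ := by
        rw [EuclideanSpace.norm_single, norm_one, mul_one]; rfl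

lemma norm_diagonal_le (d : Fin N → ℂ) {M : ℝ} (hM : 0 ≤ M) (h : ∀ i, ‖d i‖ ≤ M) :
    ‖Matrix.diagonal d‖ ≤ M := by
  rw [Matrix.cstar_norm_def]
  refine ContinuousLinearMap.opNorm_le_bound _ hM (fun x => ?_)
  have hx : ∀ j, (Matrix.toEuclideanCLM (𝕜 := ℂ) (Matrix.diagonal d) x) j = d j * x j := by
    intro j
    have := congrFun (Matrix.ofLp_toEuclideanCLM (Matrix.diagonal d) x) j
    simpa [Matrix.toLin'_apply, Matrix.mulVec_diagonal] using this
  rw [EuclideanSpace.norm_eq, EuclideanSpace.norm_eq, ← Real.sqrt_sq hM,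
    ← Real.sqrt_mul (sq_nonneg M)]
  apply Real.sqrt_le_sqrt
  rw [Finset.mul_sum]
  apply Finset.sum_le_sum
  intro j _
  rw [hx j, norm_mul, mul_pow]
  exact mul_le_mul_of_nonneg_right (pow_le_pow_left₀ (norm_nonneg _) (h j) 2) (sq_nonneg _)

lemma norm_unitary_conj (V x : Matrix (Fin N) (Fin N) ℂ)
    (hV : V ∈ unitary (Matrix (Fin N) (Fin N) ℂ)) :
    ‖V * x * star V‖ = ‖x‖ := by
  rw [CStarRing.norm_mul_mem_unitary _ (Unitary.star_mem hV),
    CStarRing.norm_mem_unitary_mul _ hV]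

lemma exp_conj_diag (V : Matrix (Fin N) (Fin N) ℂ)
    (hV : V ∈ unitary (Matrix (Fin N) (Fin N) ℂ)) (μ : Fin N → ℝ) :
    NormedSpace.exp (V * Matrix.diagonal (fun i => (μ i : ℂ)) * star V)
      = V * Matrix.diagonal (fun i => (Real.exp (μ i) : ℂ)) * star V := by
  have hVu : IsUnit V := ⟨Unitary.toUnits ⟨V, hV⟩, rfl⟩
  have hinv : V⁻¹ = star V := Matrix.inv_eq_left_inv (Unitary.star_mul_self_of_mem hV)
  rw [← hinv, Matrix.exp_conj V _ hVu, Matrix.exp_diagonal, Pi.exp_def]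
  have hfun : (fun i => NormedSpace.exp ((μ i : ℂ))) = fun i => (Real.exp (μ i) : ℂ) := by
    funext i
    rw [← Complex.exp_eq_exp_ℂ, ← Complex.ofReal_exp]
  rw [hfun]

lemma conj_diag_mul (V : Matrix (Fin N) (Fin N) ℂ)
    (hV : V ∈ unitary (Matrix (Fin N) (Fin N) ℂ)) (d e : Fin N → ℂ) :
    (V * Matrix.diagonal d * star V) * (V * Matrix.diagonal e * star V)
      = V * Matrix.diagonal (fun i => d i * e i) * star V := by
  have h := Unitary.star_mul_self_of_mem hV
  calc (V * Matrix.diagonal d * star V) * (V * Matrix.diagonal e * star V)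
      = V * (Matrix.diagonal d * ((star V * V) * (Matrix.diagonal e * star V))) := by
        simp only [mul_assoc]
    _ = V * Matrix.diagonal (fun i => d i * e i) * star V := by
        rw [h, one_mul, ← Matrix.diagonal_mul_diagonal]; simp only [mul_assoc]

lemma conj_diag_inv (V : Matrix (Fin N) (Fin N) ℂ)
    (hV : V ∈ unitary (Matrix (Fin N) (Fin N) ℂ)) (μ : Fin N → ℝ) :
    (V * Matrix.diagonal (fun i => (Real.exp (μ i) : ℂ)) * star V)
      * (V * Matrix.diagonal (fun i => (Real.exp (-μ i) : ℂ)) * star V) = 1 := by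
  rw [conj_diag_mul V hV]
  have : (fun i => (Real.exp (μ i) : ℂ) * (Real.exp (-μ i) : ℂ)) = fun _ => (1 : ℂ) := by
    funext i
    rw [← Complex.ofReal_mul, ← Real.exp_add, add_neg_cancel, Real.exp_zero, Complex.ofReal_one]
  rw [this, Matrix.diagonal_one, mul_one, Unitary.mul_star_self_of_mem hV]

lemma frobNorm_eq (a : Matrix (Fin N) (Fin N) ℂ) (ha : a.IsHermitian) :
    frobNorm a = Real.sqrt (∑ i, ha.eigenvalues i ^ 2) := by
  unfold frobNorm
  congr 1
  have hV := (ha.eigenvectorUnitary).2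
  set V : Matrix (Fin N) (Fin N) ℂ := ↑(ha.eigenvectorUnitary) with hVdef
  have hsp' : a = V * Matrix.diagonal (fun i => (ha.eigenvalues i : ℂ)) * star V :=
    ha.spectral_theorem
  have h1 : a * a.conjTranspose
      = V * Matrix.diagonal (fun i => ((ha.eigenvalues i : ℂ) * (ha.eigenvalues i : ℂ)))
          * star V := by
    have h0 : a * a.conjTranspose = a * a := by rw [show a.conjTranspose = a from ha]
    rw [h0]
    conv_lhs => rw [hsp']
    rw [conj_diag_mul V hV]
  rw [h1, Matrix.trace_mul_cycle, Unitary.star_mul_self_of_mem hV, one_mul,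
    Matrix.trace_diagonal]
  have h2 : (∑ i, ((ha.eigenvalues i : ℂ) * (ha.eigenvalues i : ℂ)))
      = ((∑ i, ha.eigenvalues i ^ 2 : ℝ) : ℂ) := by
    push_cast
    ring
  rw [h2, Complex.ofReal_re]

end FrobAux

open FrobAux in
/-- If `g = u * exp a` and `g * h = w * exp b` are polar-type decompositions
(`u`, `w` unitary; `a`, `b` Hermitian) of invertible matrices, and
`C = max (‖h‖_op) (‖h⁻¹‖_op)`, then
`N^(-1/2) ‖b‖_F − log C ≤ ‖a‖_F ≤ N^(1/2) (‖b‖_F + log C)`. -/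
theorem frobNorm_polar_comparison
    (N : ℕ) (hN : 0 < N) (g h u w a b : Matrix (Fin N) (Fin N) ℂ)
    (hg : IsUnit g) (hh : IsUnit h)
    (hu : u * u.conjTranspose = 1)
    (hw : w * w.conjTranspose = 1)
    (ha : a.IsHermitian) (hb : b.IsHermitian)
    (hdec1 : g = u * NormedSpace.exp a)
    (hdec2 : g * h = w * NormedSpace.exp b) :
    1 ≤ max ‖Matrix.toEuclideanCLM (𝕜 := ℂ) h‖ ‖Matrix.toEuclideanCLM (𝕜 := ℂ) h⁻¹‖ ∧
    (Real.sqrt N)⁻¹ * frobNorm b -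
        Real.log (max ‖Matrix.toEuclideanCLM (𝕜 := ℂ) h‖
          ‖Matrix.toEuclideanCLM (𝕜 := ℂ) h⁻¹‖)
      ≤ frobNorm a ∧
    frobNorm a ≤ Real.sqrt N *
      (frobNorm b +
        Real.log (max ‖Matrix.toEuclideanCLM (𝕜 := ℂ) h‖
          ‖Matrix.toEuclideanCLM (𝕜 := ℂ) h⁻¹‖)) := by
  haveI : Nonempty (Fin N) := ⟨⟨0, hN⟩⟩
  classical
  -- switch to the scoped L2 operator norm on matrices (definitionally equal)
  rw [show ‖Matrix.toEuclideanCLM (𝕜 := ℂ) h‖ = ‖h‖ from rfl,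
    show ‖Matrix.toEuclideanCLM (𝕜 := ℂ) h⁻¹‖ = ‖h⁻¹‖ from rfl]
  set C : ℝ := max ‖h‖ ‖h⁻¹‖ with hCdef
  -- unitarity facts
  have hu1 : u * star u = 1 := hu
  have hu2 : star u * u = 1 := by rwa [mul_eq_one_comm] at hu1
  have hw1 : w * star w = 1 := hw
  have hw2 : star w * w = 1 := by rwa [mul_eq_one_comm] at hw1
  set q : Matrix (Fin N) (Fin N) ℂ := star w * u with hqdef
  have hq1 : q * star q = 1 := by
    rw [hqdef, star_mul, star_star]
    calc star w * u * (star u * w) = star w * (u * star u) * w := by simp only [mul_assoc]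
      _ = 1 := by rw [hu1, mul_one, hw2]
  have hq2 : star q * q = 1 := by rwa [mul_eq_one_comm] at hq1
  have hqmem : q ∈ unitary (Matrix (Fin N) (Fin N) ℂ) := ⟨hq2, hq1⟩
  have hhinv : h * h⁻¹ = 1 := Matrix.mul_nonsing_inv h ((Matrix.isUnit_iff_isUnit_det h).mp hh)
  have hhinv' : h⁻¹ * h = 1 := by rwa [mul_eq_one_comm] at hhinv
  -- key algebraic relation
  have hexpb : NormedSpace.exp b = q * NormedSpace.exp a * h := by
    have h0 : w * NormedSpace.exp b = u * NormedSpace.exp a * h := by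
      rw [← hdec2, hdec1]
    calc NormedSpace.exp b = star w * (w * NormedSpace.exp b) := by
          rw [← mul_assoc, hw2, one_mul]
      _ = star w * (u * NormedSpace.exp a * h) := by rw [h0]
      _ = q * NormedSpace.exp a * h := by rw [hqdef]; simp only [mul_assoc]
  -- spectral data for a
  have hVmem := (ha.eigenvectorUnitary).2
  set V : Matrix (Fin N) (Fin N) ℂ := ↑(ha.eigenvectorUnitary) with hVdef
  set μ : Fin N → ℝ := ha.eigenvalues with hμdef
  have hA : a = V * Matrix.diagonal (fun i => (μ i : ℂ)) * star V := ha.spectral_theorem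
  have hexpA : NormedSpace.exp a
      = V * Matrix.diagonal (fun i => (Real.exp (μ i) : ℂ)) * star V := by
    conv_lhs => rw [hA]
    exact exp_conj_diag V hVmem μ
  set EA : Matrix (Fin N) (Fin N) ℂ :=
    V * Matrix.diagonal (fun i => (Real.exp (-μ i) : ℂ)) * star V with hEAdef
  have hAinv : NormedSpace.exp a * EA = 1 := by
    rw [hexpA, hEAdef]; exact conj_diag_inv V hVmem μ
  have hAinv' : EA * NormedSpace.exp a = 1 := by rwa [mul_eq_one_comm] at hAinv
  -- spectral data for b
  have hWmem := (hb.eigenvectorUnitary).2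
  set W : Matrix (Fin N) (Fin N) ℂ := ↑(hb.eigenvectorUnitary) with hWdef
  set ν : Fin N → ℝ := hb.eigenvalues with hνdef
  have hB : b = W * Matrix.diagonal (fun i => (ν i : ℂ)) * star W := hb.spectral_theorem
  have hexpB : NormedSpace.exp b
      = W * Matrix.diagonal (fun i => (Real.exp (ν i) : ℂ)) * star W := by
    conv_lhs => rw [hB]
    exact exp_conj_diag W hWmem ν
  set EB : Matrix (Fin N) (Fin N) ℂ :=
    W * Matrix.diagonal (fun i => (Real.exp (-ν i) : ℂ)) * star W with hEBdef
  have hBinv : NormedSpace.exp b * EB = 1 := by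
    rw [hexpB, hEBdef]; exact conj_diag_inv W hWmem ν
  have hBinv' : EB * NormedSpace.exp b = 1 := by rwa [mul_eq_one_comm] at hBinv
  -- EB in terms of EA
  have hEB : EB = h⁻¹ * EA * star q := by
    have hx : NormedSpace.exp b * (h⁻¹ * EA * star q) = 1 := by
      rw [hexpb]
      calc q * NormedSpace.exp a * h * (h⁻¹ * EA * star q)
          = q * (NormedSpace.exp a * ((h * h⁻¹) * (EA * star q))) := by simp only [mul_assoc]
        _ = q * ((NormedSpace.exp a * EA) * star q) := by
            rw [hhinv, one_mul]; simp only [mul_assoc]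
        _ = 1 := by rw [hAinv, one_mul, hq1]
    calc EB = EB * (NormedSpace.exp b * (h⁻¹ * EA * star q)) := by rw [hx, mul_one]
      _ = (EB * NormedSpace.exp b) * (h⁻¹ * EA * star q) := by simp only [mul_assoc]
      _ = h⁻¹ * EA * star q := by rw [hBinv', one_mul]
  -- exp a in terms of exp b
  have hexpa2 : NormedSpace.exp a = star q * NormedSpace.exp b * h⁻¹ := by
    rw [hexpb]
    calc NormedSpace.exp a
        = (star q * q) * NormedSpace.exp a * (h * h⁻¹) := by rw [hq2, hhinv, one_mul, mul_one]
      _ = star q * (q * NormedSpace.exp a * h) * h⁻¹ := by simp only [mul_assoc]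
  have hEA2 : EA = h * EB * q := by
    have hx : NormedSpace.exp a * (h * EB * q) = 1 := by
      rw [hexpa2]
      calc star q * NormedSpace.exp b * h⁻¹ * (h * EB * q)
          = star q * (NormedSpace.exp b * ((h⁻¹ * h) * (EB * q))) := by simp only [mul_assoc]
        _ = star q * ((NormedSpace.exp b * EB) * q) := by
            rw [hhinv', one_mul]; simp only [mul_assoc]
        _ = 1 := by rw [hBinv, one_mul, hq2]
    calc EA = EA * (NormedSpace.exp a * (h * EB * q)) := by rw [hx, mul_one]
      _ = (EA * NormedSpace.exp a) * (h * EB * q) := by simp only [mul_assoc]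
      _ = h * EB * q := by rw [hAinv', one_mul]
  -- sup of |eigenvalues|
  have hne : (Finset.univ : Finset (Fin N)).Nonempty := Finset.univ_nonempty
  set Λa : ℝ := Finset.univ.sup' hne (fun i => |μ i|) with hΛa
  set Λb : ℝ := Finset.univ.sup' hne (fun i => |ν i|) with hΛb
  have hΛa_le : ∀ i, |μ i| ≤ Λa := fun i =>
    Finset.le_sup' (fun i => |μ i|) (Finset.mem_univ i)
  have hΛb_le : ∀ i, |ν i| ≤ Λb := fun i =>
    Finset.le_sup' (fun i => |ν i|) (Finset.mem_univ i)
  have hΛa0 : 0 ≤ Λa := le_trans (abs_nonneg _) (hΛa_le (Classical.arbitrary _))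
  have hΛb0 : 0 ≤ Λb := le_trans (abs_nonneg _) (hΛb_le (Classical.arbitrary _))
  -- norm bounds for exponentials
  have hnorm_expA : ‖NormedSpace.exp a‖ ≤ Real.exp Λa := by
    rw [hexpA, norm_unitary_conj V _ hVmem]
    refine norm_diagonal_le _ (Real.exp_pos _).le (fun i => ?_)
    rw [Complex.norm_real, Real.norm_eq_abs, abs_of_pos (Real.exp_pos _)]
    exact Real.exp_le_exp.mpr (le_trans (le_abs_self _) (hΛa_le i))
  have hnorm_EA : ‖EA‖ ≤ Real.exp Λa := by
    rw [hEAdef, norm_unitary_conj V _ hVmem]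
    refine norm_diagonal_le _ (Real.exp_pos _).le (fun i => ?_)
    rw [Complex.norm_real, Real.norm_eq_abs, abs_of_pos (Real.exp_pos _)]
    exact Real.exp_le_exp.mpr (le_trans (neg_le_abs _) (hΛa_le i))
  have hnorm_expB : ‖NormedSpace.exp b‖ ≤ Real.exp Λb := by
    rw [hexpB, norm_unitary_conj W _ hWmem]
    refine norm_diagonal_le _ (Real.exp_pos _).le (fun i => ?_)
    rw [Complex.norm_real, Real.norm_eq_abs, abs_of_pos (Real.exp_pos _)]
    exact Real.exp_le_exp.mpr (le_trans (le_abs_self _) (hΛb_le i))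
  have hnorm_EB : ‖EB‖ ≤ Real.exp Λb := by
    rw [hEBdef, norm_unitary_conj W _ hWmem]
    refine norm_diagonal_le _ (Real.exp_pos _).le (fun i => ?_)
    rw [Complex.norm_real, Real.norm_eq_abs, abs_of_pos (Real.exp_pos _)]
    exact Real.exp_le_exp.mpr (le_trans (neg_le_abs _) (hΛb_le i))
  have hlow_expB : ∀ i, Real.exp (ν i) ≤ ‖NormedSpace.exp b‖ := by
    intro i
    rw [hexpB, norm_unitary_conj W _ hWmem]
    have := le_norm_diagonal (fun i => (Real.exp (ν i) : ℂ)) i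
    rwa [Complex.norm_real, Real.norm_eq_abs, abs_of_pos (Real.exp_pos _)] at this
  have hlow_EB : ∀ i, Real.exp (-ν i) ≤ ‖EB‖ := by
    intro i
    rw [hEBdef, norm_unitary_conj W _ hWmem]
    have := le_norm_diagonal (fun i => (Real.exp (-ν i) : ℂ)) i
    rwa [Complex.norm_real, Real.norm_eq_abs, abs_of_pos (Real.exp_pos _)] at this
  have hlow_expA : ∀ i, Real.exp (μ i) ≤ ‖NormedSpace.exp a‖ := by
    intro i
    rw [hexpA, norm_unitary_conj V _ hVmem]
    have := le_norm_diagonal (fun i => (Real.exp (μ i) : ℂ)) i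
    rwa [Complex.norm_real, Real.norm_eq_abs, abs_of_pos (Real.exp_pos _)] at this
  have hlow_EA : ∀ i, Real.exp (-μ i) ≤ ‖EA‖ := by
    intro i
    rw [hEAdef, norm_unitary_conj V _ hVmem]
    have := le_norm_diagonal (fun i => (Real.exp (-μ i) : ℂ)) i
    rwa [Complex.norm_real, Real.norm_eq_abs, abs_of_pos (Real.exp_pos _)] at this
  -- C ≥ 1
  have hCh : ‖h‖ ≤ C := le_max_left _ _
  have hCh' : ‖h⁻¹‖ ≤ C := le_max_right _ _
  have hC0 : 0 ≤ C := le_trans (norm_nonneg h) hCh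
  have hC1 : 1 ≤ C := by
    have h11 : (1:ℝ) ≤ ‖h‖ * ‖h⁻¹‖ := by
      have : (1:ℝ) = ‖(1 : Matrix (Fin N) (Fin N) ℂ)‖ := (CStarRing.norm_one).symm
      rw [this, ← hhinv]
      exact norm_mul_le _ _
    nlinarith [norm_nonneg h, norm_nonneg h⁻¹]
  have hCpos : (0:ℝ) < C := lt_of_lt_of_le one_pos hC1
  have hlogC0 : 0 ≤ Real.log C := Real.log_nonneg hC1
  -- norm chains
  have hchain1 : ‖NormedSpace.exp b‖ ≤ Real.exp Λa * C := by
    calc ‖NormedSpace.exp b‖ = ‖q * NormedSpace.exp a * h‖ := by rw [hexpb]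
      _ = ‖q * (NormedSpace.exp a * h)‖ := by rw [mul_assoc]
      _ = ‖NormedSpace.exp a * h‖ := CStarRing.norm_mem_unitary_mul _ hqmem
      _ ≤ ‖NormedSpace.exp a‖ * ‖h‖ := norm_mul_le _ _
      _ ≤ Real.exp Λa * C :=
          mul_le_mul hnorm_expA hCh (norm_nonneg _) (Real.exp_pos _).le
  have hchain2 : ‖EB‖ ≤ Real.exp Λa * C := by
    calc ‖EB‖ = ‖h⁻¹ * EA * star q‖ := by rw [hEB]
      _ = ‖h⁻¹ * EA‖ := CStarRing.norm_mul_mem_unitary _ (Unitary.star_mem hqmem)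
      _ ≤ ‖h⁻¹‖ * ‖EA‖ := norm_mul_le _ _
      _ ≤ C * Real.exp Λa :=
          mul_le_mul hCh' hnorm_EA (norm_nonneg _) hC0
      _ = Real.exp Λa * C := mul_comm _ _
  have hchain3 : ‖NormedSpace.exp a‖ ≤ Real.exp Λb * C := by
    calc ‖NormedSpace.exp a‖ = ‖star q * NormedSpace.exp b * h⁻¹‖ := by rw [hexpa2]
      _ = ‖star q * (NormedSpace.exp b * h⁻¹)‖ := by rw [mul_assoc]
      _ = ‖NormedSpace.exp b * h⁻¹‖ := CStarRing.norm_mem_unitary_mul _ (Unitary.star_mem hqmem)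
      _ ≤ ‖NormedSpace.exp b‖ * ‖h⁻¹‖ := norm_mul_le _ _
      _ ≤ Real.exp Λb * C :=
          mul_le_mul hnorm_expB hCh' (norm_nonneg _) (Real.exp_pos _).le
  have hchain4 : ‖EA‖ ≤ Real.exp Λb * C := by
    calc ‖EA‖ = ‖h * EB * q‖ := by rw [hEA2]
      _ = ‖h * EB‖ := CStarRing.norm_mul_mem_unitary _ hqmem
      _ ≤ ‖h‖ * ‖EB‖ := norm_mul_le _ _
      _ ≤ C * Real.exp Λb := mul_le_mul hCh hnorm_EB (norm_nonneg _) hC0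
      _ = Real.exp Λb * C := mul_comm _ _
  -- eigenvalue comparison
  have hexpC : Real.exp Λa * C = Real.exp (Λa + Real.log C) := by
    rw [Real.exp_add, Real.exp_log hCpos]
  have hexpC' : Real.exp Λb * C = Real.exp (Λb + Real.log C) := by
    rw [Real.exp_add, Real.exp_log hCpos]
  have hν_bound : ∀ i, |ν i| ≤ Λa + Real.log C := by
    intro i
    refine abs_le.mpr ⟨?_, ?_⟩
    · have := le_trans (hlow_EB i) (hchain2.trans_eq hexpC)
      have := Real.exp_le_exp.mp this
      linarith
    · exact Real.exp_le_exp.mp (le_trans (hlow_expB i) (hchain1.trans_eq hexpC))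
  have hμ_bound : ∀ i, |μ i| ≤ Λb + Real.log C := by
    intro i
    refine abs_le.mpr ⟨?_, ?_⟩
    · have := le_trans (hlow_EA i) (hchain4.trans_eq hexpC')
      have := Real.exp_le_exp.mp this
      linarith
    · exact Real.exp_le_exp.mp (le_trans (hlow_expA i) (hchain3.trans_eq hexpC'))
  have hΛb_le' : Λb ≤ Λa + Real.log C := Finset.sup'_le _ _ (fun i _ => hν_bound i)
  have hΛa_le' : Λa ≤ Λb + Real.log C := Finset.sup'_le _ _ (fun i _ => hμ_bound i)
  -- Frobenius norm vs Λ
  have hsqrtN_pos : (0:ℝ) < Real.sqrt N := Real.sqrt_pos.mpr (by exact_mod_cast hN)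
  have hfa : frobNorm a = Real.sqrt (∑ i, μ i ^ 2) := frobNorm_eq a ha
  have hfb : frobNorm b = Real.sqrt (∑ i, ν i ^ 2) := frobNorm_eq b hb
  have hfrob_ge : ∀ (c : Matrix (Fin N) (Fin N) ℂ) (hc : c.IsHermitian) (i : Fin N),
      |hc.eigenvalues i| ≤ frobNorm c := by
    intro c hc i
    rw [frobNorm_eq c hc, ← Real.sqrt_sq_eq_abs]
    apply Real.sqrt_le_sqrt
    exact Finset.single_le_sum (f := fun j => hc.eigenvalues j ^ 2)
      (fun j _ => sq_nonneg _) (Finset.mem_univ i)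
  have hΛa_le_fa : Λa ≤ frobNorm a := Finset.sup'_le _ _ (fun i _ => hfrob_ge a ha i)
  have hΛb_le_fb : Λb ≤ frobNorm b := Finset.sup'_le _ _ (fun i _ => hfrob_ge b hb i)
  have hfrob_le : ∀ (c : Matrix (Fin N) (Fin N) ℂ) (hc : c.IsHermitian) (Λ : ℝ),
      0 ≤ Λ → (∀ i, |hc.eigenvalues i| ≤ Λ) → frobNorm c ≤ Real.sqrt N * Λ := by
    intro c hc Λ hΛ0 hΛ
    rw [frobNorm_eq c hc]
    have hsum : (∑ i, hc.eigenvalues i ^ 2) ≤ (N : ℝ) * Λ ^ 2 := by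
      calc (∑ i, hc.eigenvalues i ^ 2) ≤ ∑ _i : Fin N, Λ ^ 2 := by
            apply Finset.sum_le_sum
            intro i _
            rw [← sq_abs]
            exact pow_le_pow_left₀ (abs_nonneg _) (hΛ i) 2
        _ = (N : ℝ) * Λ ^ 2 := by
            rw [Finset.sum_const, Finset.card_univ, Fintype.card_fin, nsmul_eq_mul]
    calc Real.sqrt (∑ i, hc.eigenvalues i ^ 2) ≤ Real.sqrt ((N : ℝ) * Λ ^ 2) :=
          Real.sqrt_le_sqrt hsum
      _ = Real.sqrt N * Λ := by
          rw [Real.sqrt_mul (Nat.cast_nonneg N), Real.sqrt_sq hΛ0]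
  have hfa_le : frobNorm a ≤ Real.sqrt N * Λa := hfrob_le a ha Λa hΛa0 (fun i => hΛa_le i)
  have hfb_le : frobNorm b ≤ Real.sqrt N * Λb := hfrob_le b hb Λb hΛb0 (fun i => hΛb_le i)
  refine ⟨hC1, ?_, ?_⟩
  · -- lower bound
    have h1 : frobNorm b ≤ Real.sqrt N * (Λa + Real.log C) :=
      hfb_le.trans (mul_le_mul_of_nonneg_left hΛb_le' hsqrtN_pos.le)
    have h2 : (Real.sqrt N)⁻¹ * frobNorm b ≤ Λa + Real.log C := by
      rw [inv_mul_le_iff₀ hsqrtN_pos]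
      exact h1
    linarith [hΛa_le_fa]
  · -- upper bound
    calc frobNorm a ≤ Real.sqrt N * Λa := hfa_le
      _ ≤ Real.sqrt N * (Λb + Real.log C) := mul_le_mul_of_nonneg_left hΛa_le' hsqrtN_pos.le
      _ ≤ Real.sqrt N * (frobNorm b + Real.log C) :=
          mul_le_mul_of_nonneg_left (by linarith [hΛb_le_fb]) hsqrtN_pos.le
end

section
/- Let E be a finite-dimensional complex inner product space and A a self-adjoint (Hermitian) linear endomorphism of E. Let x ∈ E and define f(t) = ⟪exp(tA) x, A exp(tA) x⟫ (a real number, since A is self-adjoint). If x lies in the span of the eigenvectors of A with nonpositive eigenvalues, then f(t) tends to 0 as t → +∞; otherwise f(t) tends to +∞ as t → +∞. -/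
open Filter

section Aux

variable {E : Type*} [NormedAddCommGroup E] [NormedSpace ℂ E] [CompleteSpace E]

lemma exp_apply_eigenvector (A : E →L[ℂ] E) {v : E} {μ : ℂ} (h : A v = μ • v) :
    NormedSpace.exp A v = Complex.exp μ • v := by
  have hpow : ∀ n : ℕ, (A ^ n) v = μ ^ n • v := by
    intro n
    induction n with
    | zero => simp
    | succ n ih =>
        rw [pow_succ, ContinuousLinearMap.mul_apply, h, map_smul, ih, smul_smul, pow_succ,
          mul_comm (μ ^ n) μ]
  have hsum : Summable fun n : ℕ => ((n.factorial : ℂ))⁻¹ • A ^ n := NormedSpace.expSeries_summable' A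
  have hsumc : Summable fun n : ℕ => ((n.factorial : ℂ))⁻¹ * μ ^ n := by
    simpa [smul_eq_mul] using NormedSpace.expSeries_summable' (𝕂 := ℂ) μ
  have key : (∑' n : ℕ, ((n.factorial : ℂ))⁻¹ • A ^ n) v = ∑' n : ℕ, (((n.factorial : ℂ))⁻¹ • A ^ n) v :=
    (ContinuousLinearMap.apply ℂ E v).map_tsum hsum
  rw [NormedSpace.exp_eq_tsum (𝕂 := ℂ)]
  rw [key]
  have : ∀ n : ℕ, (((n.factorial : ℂ))⁻¹ • A ^ n) v = (((n.factorial : ℂ))⁻¹ * μ ^ n) • v := by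
    intro n
    rw [ContinuousLinearMap.smul_apply, hpow, smul_smul]
  rw [tsum_congr this, hsumc.tsum_smul_const]
  congr 1
  rw [Complex.exp_eq_exp_ℂ, NormedSpace.exp_eq_tsum (𝕂 := ℂ)]
  exact tsum_congr fun n => by rw [smul_eq_mul]

end Aux

lemma aux_tendsto_zero (μ K : ℝ) (hμ : μ ≤ 0) :
    Tendsto (fun t : ℝ => μ * Real.exp (t * μ) ^ 2 * K) atTop (nhds 0) := by
  rcases hμ.eq_or_lt with h | h
  · simp [h]
  · have h1 : Tendsto (fun t : ℝ => t * μ) atTop atBot :=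
      Tendsto.atTop_mul_const_of_neg h tendsto_id
    have h2 : Tendsto (fun t : ℝ => Real.exp (t * μ)) atTop (nhds 0) :=
      Real.tendsto_exp_atBot.comp h1
    have h3 : Tendsto (fun t : ℝ => μ * Real.exp (t * μ) ^ 2 * K) atTop
        (nhds (μ * 0 ^ 2 * K)) := (((h2.pow 2).const_mul μ).mul_const K)
    simpa using h3

lemma aux_tendsto_atTop (μ K : ℝ) (hμ : 0 < μ) (hK : 0 < K) :
    Tendsto (fun t : ℝ => μ * Real.exp (t * μ) ^ 2 * K) atTop atTop := by
  have h1 : Tendsto (fun t : ℝ => t * μ) atTop atTop := tendsto_id.atTop_mul_const hμ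
  have h2 : Tendsto (fun t : ℝ => Real.exp (t * μ)) atTop atTop :=
    Real.tendsto_exp_atTop.comp h1
  have h3 : Tendsto (fun t : ℝ => Real.exp (t * μ) ^ 2) atTop atTop :=
    (tendsto_pow_atTop (two_ne_zero)).comp h2
  have h4 : Tendsto (fun t : ℝ => (μ * K) * Real.exp (t * μ) ^ 2) atTop atTop :=
    h3.const_mul_atTop (mul_pos hμ hK)
  refine h4.congr fun t => by ring

/-- Let `A` be a self-adjoint endomorphism of a finite-dimensional complex
inner product space `E`, let `x ∈ E`, and let `f t = ⟪exp (t A) x, A (exp (t A) x)⟫` (real,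
as `A` is self-adjoint).  If `x` lies in the span of the eigenvectors of `A` with nonpositive
eigenvalues then `f t → 0` as `t → +∞`; otherwise `f t → +∞`. -/
theorem tendsto_inner_exp_smul_selfAdjoint
    {E : Type*} [NormedAddCommGroup E] [InnerProductSpace ℂ E] [FiniteDimensional ℂ E]
    (A : E →L[ℂ] E) (hA : IsSelfAdjoint A) (x : E) :
    (x ∈ Submodule.span ℂ {v : E | ∃ μ : ℝ, μ ≤ 0 ∧ A v = (μ : ℂ) • v} →
      Tendsto (fun t : ℝ =>
          (inner ℂ (NormedSpace.exp (t • A) x) (A (NormedSpace.exp (t • A) x)) : ℂ).re)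
        atTop (nhds 0)) ∧
    (x ∉ Submodule.span ℂ {v : E | ∃ μ : ℝ, μ ≤ 0 ∧ A v = (μ : ℂ) • v} →
      Tendsto (fun t : ℝ =>
          (inner ℂ (NormedSpace.exp (t • A) x) (A (NormedSpace.exp (t • A) x)) : ℂ).re)
        atTop atTop) := by
  classical
  have hsym : (A : E →ₗ[ℂ] E).IsSymmetric := hA.isSymmetric
  set n := Module.finrank ℂ E with hn
  set b : OrthonormalBasis (Fin n) ℂ E := hsym.eigenvectorBasis rfl with hb
  set μ : Fin n → ℝ := hsym.eigenvalues rfl with hμdef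
  have heig : ∀ i, A (b i) = (μ i : ℂ) • b i := fun i => hsym.apply_eigenvectorBasis rfl i
  set c : Fin n → ℂ := fun i => inner ℂ (b i) x with hc
  -- eigenvector property for t • A
  have heigt : ∀ (t : ℝ) (i : Fin n), (t • A) (b i) = ((t * μ i : ℝ) : ℂ) • b i := by
    intro t i
    have hts : t • ((μ i : ℝ) : ℂ) = ((t * μ i : ℝ) : ℂ) := by
      rw [Complex.real_smul]; push_cast; ring
    rw [ContinuousLinearMap.smul_apply, heig, ← smul_assoc, hts]
  -- exponential on eigenvectors
  have hexp : ∀ (t : ℝ) (i : Fin n),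
      NormedSpace.exp (t • A) (b i) = ((Real.exp (t * μ i) : ℝ) : ℂ) • b i := by
    intro t i
    rw [exp_apply_eigenvector (t • A) (heigt t i), Complex.ofReal_exp]
  -- expansion of x
  have hx : ∑ i, c i • b i = x := by
    simpa [hc, b.repr_apply_apply] using b.sum_repr x
  -- expansion of exp (t • A) x
  have hexpx : ∀ t : ℝ, NormedSpace.exp (t • A) x
      = ∑ i, (((Real.exp (t * μ i) : ℝ) : ℂ) * c i) • b i := by
    intro t
    conv_lhs => rw [← hx]
    rw [map_sum]
    refine Finset.sum_congr rfl fun i _ => ?_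
    rw [map_smul, hexp, smul_smul, mul_comm]
  have hAexpx : ∀ t : ℝ, A (NormedSpace.exp (t • A) x)
      = ∑ i, ((μ i : ℂ) * (((Real.exp (t * μ i) : ℝ) : ℂ) * c i)) • b i := by
    intro t
    rw [hexpx, map_sum]
    refine Finset.sum_congr rfl fun i _ => ?_
    rw [map_smul, heig, smul_smul, mul_comm]
  -- the main formula
  have hF : ∀ t : ℝ,
      (inner ℂ (NormedSpace.exp (t • A) x) (A (NormedSpace.exp (t • A) x)) : ℂ).re
      = ∑ i, μ i * Real.exp (t * μ i) ^ 2 * Complex.normSq (c i) := by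
    intro t
    rw [hAexpx, hexpx, b.orthonormal.inner_sum]
    rw [Complex.re_sum]
    refine Finset.sum_congr rfl fun i _ => ?_
    have : (starRingEnd ℂ) (((Real.exp (t * μ i) : ℝ) : ℂ) * c i)
        * ((μ i : ℂ) * (((Real.exp (t * μ i) : ℝ) : ℂ) * c i))
        = ((μ i * Real.exp (t * μ i) ^ 2 * Complex.normSq (c i) : ℝ) : ℂ) := by
      rw [map_mul, Complex.conj_ofReal]
      push_cast
      rw [← Complex.mul_conj]
      ring
    rw [this, Complex.ofReal_re]
  -- characterization of membership in the span
  set S : Set E := {v : E | ∃ ν : ℝ, ν ≤ 0 ∧ A v = (ν : ℂ) • v} with hS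
  have hchar : x ∈ Submodule.span ℂ S ↔ ∀ i, 0 < μ i → c i = 0 := by
    constructor
    · intro hxmem i hi
      have hsub : S ⊆ (LinearMap.ker ((innerSL ℂ (b i) : E →L[ℂ] ℂ) : E →ₗ[ℂ] ℂ) : Set E) := by
        rintro v ⟨ν, hν, hv⟩
        have h1 : (inner ℂ (b i) (A v) : ℂ) = (ν : ℂ) * inner ℂ (b i) v := by
          rw [hv, inner_smul_right]
        have h2 : (inner ℂ (b i) (A v) : ℂ) = (μ i : ℂ) * inner ℂ (b i) v := by
          have hs := hsym (b i) v
          simp only [ContinuousLinearMap.coe_coe] at hs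
          rw [← hs, heig, inner_smul_left, Complex.conj_ofReal]
        have h3 : ((μ i : ℂ) - (ν : ℂ)) * inner ℂ (b i) v = 0 := by
          rw [sub_mul, ← h2, ← h1, sub_self]
        have h4 : ((μ i : ℂ) - (ν : ℂ)) ≠ 0 := by
          simp only [← Complex.ofReal_sub, Ne, Complex.ofReal_eq_zero, sub_eq_zero]
          intro h
          exact absurd (h ▸ hi) (not_lt.2 hν)
        simpa [LinearMap.mem_ker, innerSL_apply_apply] using (mul_eq_zero.1 h3).resolve_left h4
      have := (Submodule.span_le.2 hsub) hxmem
      simpa [LinearMap.mem_ker, innerSL_apply_apply, hc] using this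
    · intro h
      rw [← hx]
      refine Submodule.sum_mem _ fun i _ => ?_
      by_cases hi : 0 < μ i
      · simp [h i hi]
      · exact Submodule.smul_mem _ _ (Submodule.subset_span
          ⟨μ i, not_lt.1 hi, heig i⟩)
  constructor
  · intro hxmem
    have hzero := hchar.1 hxmem
    simp only [hF]
    have : Tendsto (fun t : ℝ => ∑ i, μ i * Real.exp (t * μ i) ^ 2 * Complex.normSq (c i))
        atTop (nhds (∑ _i : Fin n, (0 : ℝ))) := by
      refine tendsto_finset_sum _ fun i _ => ?_
      by_cases hi : 0 < μ i
      · simp [hzero i hi]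
      · exact aux_tendsto_zero _ _ (not_lt.1 hi)
    simpa using this
  · intro hxmem
    obtain ⟨j, hj, hcj⟩ : ∃ j, 0 < μ j ∧ c j ≠ 0 := by
      by_contra h
      push_neg at h
      exact hxmem (hchar.2 fun i hi => by
        by_contra hne; exact absurd hi (by simpa [hne] using (h i)))
    simp only [hF]
    set P : Finset (Fin n) := Finset.univ.filter (fun i => 0 < μ i) with hP
    have hsplit : ∀ t : ℝ, ∑ i, μ i * Real.exp (t * μ i) ^ 2 * Complex.normSq (c i)
        = (∑ i ∈ P, μ i * Real.exp (t * μ i) ^ 2 * Complex.normSq (c i))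
          + ∑ i ∈ Pᶜ, μ i * Real.exp (t * μ i) ^ 2 * Complex.normSq (c i) := by
      intro t
      rw [Finset.sum_add_sum_compl]
    have hfirst : Tendsto
        (fun t : ℝ => ∑ i ∈ P, μ i * Real.exp (t * μ i) ^ 2 * Complex.normSq (c i))
        atTop atTop := by
      have hjP : j ∈ P := by simp [hP, hj]
      have hmono : ∀ t : ℝ, μ j * Real.exp (t * μ j) ^ 2 * Complex.normSq (c j)
          ≤ ∑ i ∈ P, μ i * Real.exp (t * μ i) ^ 2 * Complex.normSq (c i) := by
        intro t
        refine Finset.single_le_sum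
          (f := fun i => μ i * Real.exp (t * μ i) ^ 2 * Complex.normSq (c i))
          (fun i hi => ?_) hjP
        have hμi : 0 < μ i := by simpa [hP] using hi
        have h0 : (0:ℝ) ≤ Complex.normSq (c i) := Complex.normSq_nonneg _
        positivity
      exact tendsto_atTop_mono hmono
        (aux_tendsto_atTop (μ j) (Complex.normSq (c j)) hj (Complex.normSq_pos.2 hcj))
    have hsecond : Tendsto
        (fun t : ℝ => ∑ i ∈ Pᶜ, μ i * Real.exp (t * μ i) ^ 2 * Complex.normSq (c i))
        atTop (nhds (∑ _i ∈ Pᶜ, (0 : ℝ))) := by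
      refine tendsto_finset_sum _ fun i hi => ?_
      have hμi : ¬ 0 < μ i := by simpa [hP] using hi
      exact aux_tendsto_zero _ _ (not_lt.1 hμi)
    have hsecond' : ∀ᶠ t in (atTop : Filter ℝ),
        (-1 : ℝ) ≤ ∑ i ∈ Pᶜ, μ i * Real.exp (t * μ i) ^ 2 * Complex.normSq (c i) := by
      have : (∑ _i ∈ Pᶜ, (0 : ℝ)) = 0 := by simp
      rw [this] at hsecond
      exact hsecond.eventually (eventually_ge_nhds (by norm_num))
    have := tendsto_atTop_add_right_of_le' atTop (-1 : ℝ) hfirst hsecond'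
    exact this.congr fun t => (hsplit t).symm
end

section
/- Let E be a finite-dimensional complex inner product space and A a self-adjoint (Hermitian) linear endomorphism of E. Let x ∈ E be nonzero. Then, as t → +∞, the Rayleigh quotient ⟪exp(tA) x, A exp(tA) x⟫ / ‖exp(tA) x‖² converges to the largest eigenvalue λ of A such that the orthogonal projection of x onto the λ-eigenspace of A is nonzero. -/
open Filter

lemma exp_apply_of_eq_smul {E : Type*} [NormedAddCommGroup E] [NormedSpace ℂ E]
    [CompleteSpace E] (B : E →L[ℂ] E) (v : E) (a : ℂ) (h : B v = a • v) :
    NormedSpace.exp B v = Complex.exp a • v := by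
  have hpow : ∀ n : ℕ, (B ^ n) v = a ^ n • v := by
    intro n
    induction n with
    | zero => simp
    | succ n ih =>
      rw [pow_succ, pow_succ, ContinuousLinearMap.mul_apply, h, map_smul, ih, smul_smul,
        mul_comm]
  have hs : Summable (fun n : ℕ => (n.factorial : ℂ)⁻¹ • B ^ n) := NormedSpace.expSeries_summable' B
  have hs2 : Summable (fun n : ℕ => (n.factorial : ℂ)⁻¹ • a ^ n) := NormedSpace.expSeries_summable' a
  rw [NormedSpace.exp_eq_tsum (𝕂 := ℂ)]
  have h1 := ((ContinuousLinearMap.apply ℂ E v).map_tsum hs)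
  simp only [ContinuousLinearMap.apply_apply] at h1
  rw [h1]
  have h2 : (fun n : ℕ => ((n.factorial : ℂ)⁻¹ • B ^ n) v) = fun n : ℕ => ((n.factorial : ℂ)⁻¹ • a ^ n) • v := by
    funext n
    rw [ContinuousLinearMap.smul_apply, hpow, smul_smul]
    simp [smul_smul]
  rw [h2, Summable.tsum_smul_const hs2]
  congr 1
  rw [Complex.exp_eq_exp_ℂ, NormedSpace.exp_eq_tsum (𝕂 := ℂ)]

lemma aux_rayleigh_tendsto {n : ℕ} (lam : Fin n → ℝ) (w : Fin n → ℝ) (hw : ∀ i, 0 ≤ w i)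
    (i₀ : Fin n) (hw₀ : 0 < w i₀) (hmax : ∀ i, w i ≠ 0 → lam i ≤ lam i₀) :
    Tendsto (fun t : ℝ => (∑ i, lam i * (Real.exp (t * lam i) ^ 2 * w i)) /
        (∑ i, Real.exp (t * lam i) ^ 2 * w i)) atTop (nhds (lam i₀)) := by
  classical
  set μ := lam i₀ with hμ
  set L : ℝ := ∑ i, if lam i = μ then w i else 0 with hL
  have hLpos : 0 < L := by
    have h1 : (if lam i₀ = μ then w i₀ else 0) ≤ L := by
      apply Finset.single_le_sum (f := fun i => if lam i = μ then w i else 0)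
      · intro i _; split <;> simp [hw i]
      · exact Finset.mem_univ i₀
    rw [if_pos rfl] at h1
    linarith
  have hterm : ∀ i : Fin n, Tendsto (fun t : ℝ => Real.exp (2 * t * (lam i - μ)) * w i)
      atTop (nhds (if lam i = μ then w i else 0)) := by
    intro i
    by_cases h : lam i = μ
    · simp only [h, sub_self, mul_zero, Real.exp_zero, one_mul, if_pos rfl]
      exact tendsto_const_nhds
    · rw [if_neg h]
      by_cases hwi : w i = 0
      · simp only [hwi, mul_zero]; exact tendsto_const_nhds
      · have hlt : lam i - μ < 0 := sub_neg.mpr (lt_of_le_of_ne (hmax i hwi) h)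
        have h2 : Tendsto (fun t : ℝ => 2 * t * (lam i - μ)) atTop atBot := by
          have := (tendsto_mul_const_atBot_of_neg (f := fun t : ℝ => 2 * t) (l := atTop)
            hlt).mpr (tendsto_id.const_mul_atTop (by norm_num : (0:ℝ) < 2))
          exact this
        have h3 : Tendsto (fun t : ℝ => Real.exp (2 * t * (lam i - μ))) atTop (nhds 0) :=
          Real.tendsto_exp_atBot.comp h2
        simpa using h3.mul_const (w i)
  have hD : Tendsto (fun t : ℝ => ∑ i, Real.exp (2 * t * (lam i - μ)) * w i) atTop (nhds L) := by
    rw [hL]; exact tendsto_finset_sum _ (fun i _ => hterm i)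
  have hN : Tendsto (fun t : ℝ => ∑ i, lam i * (Real.exp (2 * t * (lam i - μ)) * w i)) atTop
      (nhds (μ * L)) := by
    have : μ * L = ∑ i, lam i * (if lam i = μ then w i else 0) := by
      rw [hL, Finset.mul_sum]
      apply Finset.sum_congr rfl
      intro i _
      split
      · next hh => rw [hh]
      · simp
    rw [this]
    exact tendsto_finset_sum _ (fun i _ => (hterm i).const_mul (lam i))
  have hdiv := hN.div hD hLpos.ne'
  rw [mul_div_assoc, div_self hLpos.ne', mul_one] at hdiv
  apply hdiv.congr
  intro t
  have he : ∀ i : Fin n, Real.exp (t * lam i) ^ 2 = Real.exp (2 * t * μ) * Real.exp (2 * t * (lam i - μ)) := by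
    intro i
    rw [← Real.exp_add, ← Real.exp_nat_mul]
    ring_nf
  have hnum : ∑ i, lam i * (Real.exp (t * lam i) ^ 2 * w i)
      = Real.exp (2 * t * μ) * ∑ i, lam i * (Real.exp (2 * t * (lam i - μ)) * w i) := by
    rw [Finset.mul_sum]; apply Finset.sum_congr rfl; intro i _; rw [he i]; ring
  have hden : ∑ i, Real.exp (t * lam i) ^ 2 * w i
      = Real.exp (2 * t * μ) * ∑ i, Real.exp (2 * t * (lam i - μ)) * w i := by
    rw [Finset.mul_sum]; apply Finset.sum_congr rfl; intro i _; rw [he i]; ring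
  rw [hnum, hden, mul_div_mul_left _ _ (Real.exp_ne_zero _)]
  rfl

/-- For a self-adjoint endomorphism `A` of a finite-dimensional complex inner
product space and `x ≠ 0`, the Rayleigh quotient `⟪exp(tA) x, A exp(tA) x⟫ / ‖exp(tA) x‖²`
converges, as `t → +∞`, to the largest eigenvalue `μ` of `A` such that the orthogonal
projection of `x` onto the `μ`-eigenspace is nonzero. -/
theorem tendsto_rayleigh_exp_smul_selfAdjoint
    {E : Type*} [NormedAddCommGroup E] [InnerProductSpace ℂ E] [FiniteDimensional ℂ E]
    (A : E →L[ℂ] E) (hA : IsSelfAdjoint A) (x : E) (hx : x ≠ 0) :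
    ∃ μ : ℝ,
      Submodule.orthogonalProjectionOnto (Module.End.eigenspace (A : E →ₗ[ℂ] E) (μ : ℂ)) x ≠ 0 ∧
      (∀ ν : ℝ,
        Submodule.orthogonalProjectionOnto (Module.End.eigenspace (A : E →ₗ[ℂ] E) (ν : ℂ)) x ≠ 0 → ν ≤ μ) ∧
      Tendsto (fun t : ℝ =>
          (inner ℂ (NormedSpace.exp (t • A) x) (A (NormedSpace.exp (t • A) x)) : ℂ).re /
            ‖NormedSpace.exp (t • A) x‖ ^ 2)
        atTop (nhds μ) := by
  classical
  have hT : (A : E →ₗ[ℂ] E).IsSymmetric := hA.isSymmetric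
  set b : OrthonormalBasis (Fin (Module.finrank ℂ E)) ℂ E := hT.eigenvectorBasis rfl with hb
  set lam : Fin (Module.finrank ℂ E) → ℝ := hT.eigenvalues rfl with hlam
  have hAb : ∀ i, A (b i) = (lam i : ℂ) • b i := fun i => hT.apply_eigenvectorBasis rfl i
  set c : Fin (Module.finrank ℂ E) → ℂ := fun i => inner ℂ (b i) x with hc
  set w : Fin (Module.finrank ℂ E) → ℝ := fun i => ‖c i‖ ^ 2 with hw
  have hwnn : ∀ i, 0 ≤ w i := fun i => sq_nonneg _
  have hxr : ∑ i, c i • b i = x := b.sum_repr' x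
  have hex : ∃ i, c i ≠ 0 := by
    by_contra h
    push_neg at h
    apply hx
    rw [← hxr]
    simp [h]
  obtain ⟨i₀, hi₀mem, hi₀max⟩ := Finset.exists_max_image
    (Finset.univ.filter (fun i => c i ≠ 0)) lam
    (by obtain ⟨i, hi⟩ := hex; exact ⟨i, by simp [hi]⟩)
  have hc₀ : c i₀ ≠ 0 := by simpa using hi₀mem
  have hw₀ : 0 < w i₀ := pow_pos (norm_pos_iff.mpr hc₀) 2
  have hmax : ∀ i, w i ≠ 0 → lam i ≤ lam i₀ := by
    intro i hwi
    have hci : c i ≠ 0 := by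
      intro h; exact hwi (by simp [hw, h])
    exact hi₀max i (by simp [hci])
  have hmemeig : ∀ i, b i ∈ Module.End.eigenspace (A : E →ₗ[ℂ] E) ((lam i : ℂ)) := by
    intro i
    rw [Module.End.mem_eigenspace_iff]
    exact hAb i
  have hproj : ∀ ν : ℝ,
      Submodule.orthogonalProjectionOnto (Module.End.eigenspace (A : E →ₗ[ℂ] E) (ν : ℂ)) x ≠ 0 ↔
        ∃ i, lam i = ν ∧ c i ≠ 0 := by
    intro ν
    constructor
    · intro h
      by_contra hcon
      push_neg at hcon
      apply h
      rw [Submodule.orthogonalProjectionOnto_eq_zero_iff]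
      intro v hv
      rw [← b.sum_inner_mul_inner v x]
      apply Finset.sum_eq_zero
      intro i _
      by_cases hli : lam i = ν
      · have h0 : (inner ℂ (b i) x : ℂ) = 0 := hcon i hli
        rw [h0, mul_zero]
      · have hne : ((ν : ℂ)) ≠ ((lam i : ℂ)) := by
          intro hh
          exact hli (by exact_mod_cast hh.symm)
        have h0 := hT.orthogonalFamily_eigenspaces hne ⟨v, hv⟩ ⟨b i, hmemeig i⟩
        exact mul_eq_zero_of_left h0 _
    · rintro ⟨i, hli, hci⟩
      intro h
      have heq := Submodule.inner_starProjection_left_eq_right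
        (Module.End.eigenspace (A : E →ₗ[ℂ] E) (ν : ℂ)) (b i) x
      have hbmem : b i ∈ Module.End.eigenspace (A : E →ₗ[ℂ] E) (ν : ℂ) := by
        rw [← hli]; exact hmemeig i
      rw [Submodule.starProjection_eq_self_iff.mpr hbmem, Submodule.starProjection_apply, h] at heq
      simp only [ZeroMemClass.coe_zero, inner_zero_right] at heq
      exact hci heq
  refine ⟨lam i₀, (hproj (lam i₀)).mpr ⟨i₀, rfl, hc₀⟩, ?_, ?_⟩
  · intro ν hν
    obtain ⟨i, hli, hci⟩ := (hproj ν).mp hν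
    rw [← hli]
    exact hi₀max i (by simp [hci])
  · -- the limit
    have hkey : ∀ t : ℝ, NormedSpace.exp (t • A) x
        = ∑ i, ((Real.exp (t * lam i) : ℂ) * c i) • b i := by
      intro t
      conv_lhs => rw [← hxr, map_sum]
      apply Finset.sum_congr rfl
      intro i _
      rw [map_smul]
      have hev : (t • A) (b i) = ((t * lam i : ℝ) : ℂ) • b i := by
        rw [ContinuousLinearMap.smul_apply, hAb i, ← smul_assoc]
        congr 1
        rw [Complex.real_smul]
        push_cast
        ring
      rw [exp_apply_of_eq_smul (t • A) (b i) _ hev, smul_smul, ← Complex.ofReal_exp, mul_comm]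
    have hinner : ∀ (t : ℝ) i, (inner ℂ (b i) (NormedSpace.exp (t • A) x) : ℂ)
        = (Real.exp (t * lam i) : ℂ) * c i := by
      intro t i
      rw [hkey t, inner_sum]
      simp only [inner_smul_right]
      rw [Finset.sum_eq_single i]
      · simp [orthonormal_iff_ite.mp b.orthonormal]
      · intro j _ hj
        simp [orthonormal_iff_ite.mp b.orthonormal, Ne.symm hj]
      · intro hmem; exact absurd (Finset.mem_univ i) hmem
    have hfinal := aux_rayleigh_tendsto lam w hwnn i₀ hw₀ hmax
    apply hfinal.congr
    intro t
    set y : E := NormedSpace.exp (t • A) x with hy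
    have hd : ∀ i, (inner ℂ (b i) y : ℂ) = (Real.exp (t * lam i) : ℂ) * c i := hinner t
    have hds : ∀ i, (starRingEnd ℂ) (inner ℂ (b i) y : ℂ) * (inner ℂ (b i) y : ℂ)
        = ((Real.exp (t * lam i) ^ 2 * w i : ℝ) : ℂ) := by
      intro i
      rw [hd i, map_mul, Complex.conj_ofReal]
      have hcc : (starRingEnd ℂ) (c i) * (c i) = ((‖c i‖ : ℂ)) ^ 2 := RCLike.conj_mul (c i)
      calc (Real.exp (t * lam i) : ℂ) * (starRingEnd ℂ) (c i) * ((Real.exp (t * lam i) : ℂ) * c i)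
          = (Real.exp (t * lam i) : ℂ) ^ 2 * ((starRingEnd ℂ) (c i) * (c i)) := by ring
        _ = (Real.exp (t * lam i) : ℂ) ^ 2 * ((‖c i‖ : ℂ)) ^ 2 := by rw [hcc]
        _ = _ := by simp only [hw]; push_cast; ring
    have hnum : (inner ℂ y (A y) : ℂ).re = ∑ i, lam i * (Real.exp (t * lam i) ^ 2 * w i) := by
      rw [← b.sum_inner_mul_inner y (A y), Complex.re_sum]
      apply Finset.sum_congr rfl
      intro i _
      have hbi : (inner ℂ (b i) (A y) : ℂ) = (lam i : ℂ) * (inner ℂ (b i) y : ℂ) := by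
        calc (inner ℂ (b i) (A y) : ℂ) = inner ℂ ((A : E →ₗ[ℂ] E) (b i)) y := (hT (b i) y).symm
          _ = inner ℂ (((lam i : ℂ)) • b i) y := by
              rw [show (A : E →ₗ[ℂ] E) (b i) = ((lam i : ℂ)) • b i from hAb i]
          _ = (lam i : ℂ) * inner ℂ (b i) y := by rw [inner_smul_left, Complex.conj_ofReal]
      rw [hbi, ← inner_conj_symm, mul_left_comm, hds i, ← Complex.ofReal_mul,
        Complex.ofReal_re]
    have hden : ‖y‖ ^ 2 = ∑ i, Real.exp (t * lam i) ^ 2 * w i := by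
      rw [← inner_self_eq_norm_sq (𝕜 := ℂ) y, RCLike.re_to_complex,
        ← b.sum_inner_mul_inner y y, Complex.re_sum]
      apply Finset.sum_congr rfl
      intro i _
      rw [← inner_conj_symm, hds i, Complex.ofReal_re]
    rw [hnum, hden]
end

section
/- Let E be a finite-dimensional complex inner product space and A a self-adjoint (Hermitian) linear endomorphism of E with distinct eigenvalues λ_1 < λ_2 < … < λ_r. For 1 ≤ j ≤ r let E_j denote the direct sum of the eigenspaces of A for the eigenvalues λ_1, …, λ_j. Let v_1, …, v_k be linearly independent vectors spanning a k-dimensional subspace π, and for t ∈ ℝ let G(t) be the k×k Gram matrix with entries G(t)_{ij} = ⟪exp(tA) v_i, exp(tA) v_j⟫ (so det G(t) is a positive real number). Then, as t → +∞, (1/(2t)) · log det G(t) converges to k·λ_r + Σ_{j=1}^{r-1} (λ_j − λ_{j+1}) · dim(π ∩ E_j). -/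
set_option linter.unusedSectionVars false
set_option maxHeartbeats 1000000

open Filter Submodule Set Module Nat Matrix

section Helpers
variable {E : Type*} [NormedAddCommGroup E] [InnerProductSpace ℂ E] [FiniteDimensional ℂ E]

local notation "⟪" x ", " y "⟫" => inner (𝕜 := ℂ) x y

lemma exp_apply_eigen (A : E →L[ℂ] E) (t : ℝ) (c : ℝ) (x : E)
    (hx : x ∈ Module.End.eigenspace (A : E →ₗ[ℂ] E) (c : ℂ)) :
    NormedSpace.exp (t • A) x = (Real.exp (t * c) : ℂ) • x := by
  have hAx : A x = (c : ℂ) • x := Module.End.mem_eigenspace_iff.mp hx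
  have hsm : ∀ y : E, t • y = ((t : ℂ)) • y := fun y => (IsScalarTower.algebraMap_smul ℂ t y).symm
  have hpow : ∀ n : ℕ, ((t • A) ^ n) x = ((t : ℂ) * c) ^ n • x := by
    intro n
    induction n with
    | zero => simp
    | succ n ih =>
      have hps : (t • A) ^ (n + 1) = (t • A) ^ n * (t • A) := pow_succ _ _
      rw [hps, ContinuousLinearMap.mul_apply, ContinuousLinearMap.smul_apply, hAx, hsm,
        smul_smul, _root_.map_smul, ih, smul_smul, pow_succ]
      ring_nf
  have h2 : HasSum (fun n : ℕ => ((n ! : ℂ))⁻¹ • (((t • A) ^ n) x))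
      (NormedSpace.exp (t • A) x) := by
    have h1 : HasSum (fun n : ℕ => ((n ! : ℂ))⁻¹ • (t • A) ^ n)
        (NormedSpace.exp (t • A)) := NormedSpace.exp_series_hasSum_exp' (t • A)
    have := h1.mapL (ContinuousLinearMap.apply ℂ E x)
    simpa using this
  have h4 : HasSum (fun n : ℕ => ((n ! : ℂ))⁻¹ • (((t • A) ^ n) x))
      ((NormedSpace.exp ((t : ℂ) * c)) • x) := by
    have h3 : HasSum (fun n : ℕ => ((n ! : ℂ))⁻¹ • ((t : ℂ) * c) ^ n)
        (NormedSpace.exp ((t : ℂ) * c)) := NormedSpace.exp_series_hasSum_exp' _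
    have := h3.smul_const x
    refine this.congr_fun fun n => ?_
    rw [hpow n, smul_assoc]
  rw [h2.unique h4, ← Complex.exp_eq_exp_ℂ, ← Complex.ofReal_mul, ← Complex.ofReal_exp]

omit [FiniteDimensional ℂ E] in
lemma indep_sum_eq_zero {ι : Type*} [Fintype ι] [DecidableEq ι] {V : ι → Submodule ℂ E}
    (hInd : iSupIndep V) (s : ι → E) (hs : ∀ j, s j ∈ V j) (hsum : ∑ j, s j = 0) :
    ∀ j, s j = 0 := by
  intro j₀
  have h1 : s j₀ = -∑ j ∈ Finset.univ.erase j₀, s j := by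
    have := Finset.add_sum_erase Finset.univ s (Finset.mem_univ j₀)
    rw [hsum] at this
    linear_combination (norm := module) this
  have h2 : (∑ j ∈ Finset.univ.erase j₀, s j) ∈ ⨆ j, ⨆ (_ : j ≠ j₀), V j := by
    refine Submodule.sum_mem _ fun j hj => ?_
    exact Submodule.mem_iSup_of_mem j (Submodule.mem_iSup_of_mem
      (Finset.ne_of_mem_erase hj) (hs j))
  have h3 : s j₀ ∈ (⊥ : Submodule ℂ E) := by
    refine (Submodule.disjoint_def.mp (hInd j₀)) _ (hs j₀) ?_
    rw [h1]; exact neg_mem h2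
  simpa using h3

lemma mem_biSup_decomp {r : ℕ} (V : Fin (r + 1) → Submodule ℂ E) (j : Fin (r + 1)) (x : E)
    (hx : x ∈ ⨆ p, ⨆ (_ : p ≤ j), V p) :
    ∃ y : Fin (r + 1) → E, (∀ p, y p ∈ V p) ∧ (∀ p, ¬p ≤ j → y p = 0) ∧ ∑ p, y p = x := by
  rw [Submodule.mem_iSup_iff_exists_finsupp] at hx
  obtain ⟨f, hf, hsum⟩ := hx
  refine ⟨fun p => f p, fun p => ?_, fun p hp => ?_, ?_⟩
  · show f p ∈ V p
    by_cases hp : p ≤ j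
    · have := hf p; rwa [iSup_pos hp] at this
    · have := hf p; rw [iSup_neg hp] at this
      simp only [Submodule.mem_bot] at this
      rw [this]; exact zero_mem _
  · show f p = 0
    have := hf p; rw [iSup_neg hp] at this; simpa using this
  · rw [← hsum, Finsupp.sum_fintype]
    intro _; rfl

lemma exists_linearIndependent_extension {s t : Set E}
    (hs : LinearIndependent ℂ ((↑) : s → E)) (hst : s ⊆ t) :
    ∃ b ⊆ t, s ⊆ b ∧ t ⊆ span ℂ b ∧ LinearIndependent ℂ ((↑) : b → E) := by
  obtain ⟨b, hbt, hsb, htb, hb⟩ := exists_linearIndepOn_extension (K := ℂ) (v := id) hs hst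
  refine ⟨b, hbt, hsb, ?_, hb⟩
  simpa using htb

lemma adapted_chain {r : ℕ} (Q : Fin (r + 1) → Submodule ℂ E) (hmono : Monotone Q) :
    ∀ m : ℕ, (hm : m ≤ r) → ∃ (s : Set E) (lv : E → Fin (r + 1)),
      LinearIndependent ℂ ((↑) : s → E) ∧
      span ℂ s = Q ⟨m, by omega⟩ ∧
      (∀ x ∈ s, x ∈ Q (lv x)) ∧
      (∀ x ∈ s, lv x ≤ ⟨m, by omega⟩) ∧
      (∀ j, j ≤ (⟨m, by omega⟩ : Fin (r + 1)) → (Q j : Set E) ⊆ span ℂ {x ∈ s | lv x ≤ j}) := by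
  intro m
  induction m with
  | zero =>
    intro hm
    obtain ⟨b, hbt, -, htb, hbind⟩ :=
      exists_linearIndependent_extension (linearIndependent_empty ℂ E)
        (Set.empty_subset (Q ⟨0, by omega⟩ : Set E))
    have hspan : span ℂ b = Q ⟨0, by omega⟩ := by
      refine le_antisymm ((span_le).mpr hbt) ?_
      intro x hx
      exact htb hx
    refine ⟨b, fun _ => ⟨0, by omega⟩, hbind, hspan, ?_, ?_, ?_⟩
    · intro x hx; rw [← hspan]; exact subset_span hx
    · intro x hx; exact le_refl _
    · intro j hj
      have hj0 : j = ⟨0, by omega⟩ := le_antisymm hj (by simp [Fin.le_def])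
      have : {x ∈ b | (⟨0, by omega⟩ : Fin (r + 1)) ≤ j} = b := by
        ext x; simp [hj0]
      rw [this, hspan, hj0]
  | succ m ih =>
    intro hm
    obtain ⟨s, lv, hsind, hsspan, hsmem, hsle, hsP3⟩ := ih (by omega)
    have hsub : s ⊆ (Q ⟨m + 1, by omega⟩ : Set E) := by
      intro x hx
      have : x ∈ Q ⟨m, by omega⟩ := by rw [← hsspan]; exact subset_span hx
      exact hmono (by simp [Fin.le_def]) this
    obtain ⟨b, hbt, hsb, htb, hbind⟩ := exists_linearIndependent_extension hsind hsub
    classical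
    refine ⟨b, fun x => if x ∈ s then lv x else ⟨m + 1, by omega⟩, hbind, ?_, ?_, ?_, ?_⟩
    · refine le_antisymm ((span_le).mpr hbt) ?_
      intro x hx
      exact htb hx
    · intro x hx
      by_cases hxs : x ∈ s
      · simpa [hxs] using hsmem x hxs
      · simpa [hxs] using hbt hx
    · intro x hx
      by_cases hxs : x ∈ s
      · simp only [hxs, if_true]
        exact le_trans (hsle x hxs) (by simp [Fin.le_def])
      · simp [hxs]
    · intro j hj
      by_cases hjm : j ≤ (⟨m, by omega⟩ : Fin (r + 1))
      · refine (hsP3 j hjm).trans ?_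
        have hss : {x ∈ s | lv x ≤ j} ⊆ {x ∈ b | (if x ∈ s then lv x else ⟨m + 1, by omega⟩) ≤ j} := by
          intro x ⟨hx1, hx2⟩
          exact ⟨hsb hx1, by simp [hx1, hx2]⟩
        exact Set.Subset.trans (by exact_mod_cast Submodule.span_mono hss) (le_refl _)
      · have hjeq : j = ⟨m + 1, by omega⟩ := by
          have h1 : j.val ≤ m + 1 := hj
          have h2 : ¬j.val ≤ m := hjm
          exact Fin.ext (show j.val = m + 1 by omega)
        have hall : {x ∈ b | (if x ∈ s then lv x else ⟨m + 1, by omega⟩) ≤ j} = b := by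
          ext x
          simp only [Set.mem_setOf_eq, and_iff_left_iff_imp]
          intro hxb
          by_cases hxs : x ∈ s
          · simp only [hxs, if_true, hjeq]
            exact le_trans (hsle x hxs) (by simp [Fin.le_def])
          · simp [hxs, hjeq]
        show (Q j : Set E) ⊆
          ↑(span ℂ {x ∈ b | (if x ∈ s then lv x else (⟨m + 1, by omega⟩ : Fin (r + 1))) ≤ j})
        rw [hall, hjeq]
        intro x hx
        exact htb hx

lemma telescope_fin (r : ℕ) (g : Fin (r + 1) → ℝ) (a : Fin (r + 1)) :
    ∑ j : Fin r, (if a ≤ j.castSucc then g j.castSucc - g j.succ else 0)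
      = g a - g (Fin.last r) := by
  induction r with
  | zero =>
    have : a = Fin.last 0 := Subsingleton.elim (α := Fin 1) a (Fin.last 0)
    simp [this]
  | succ n ih =>
    rw [Fin.sum_univ_castSucc]
    induction a using Fin.lastCases with
    | last =>
      have h1 : ∀ j : Fin (n + 1), ¬(Fin.last (n + 1) ≤ j.castSucc) := by
        intro j h
        have := h.trans_lt (Fin.castSucc_lt_last j)
        exact lt_irrefl _ this
      simp [h1]
    | cast i =>
      have hlast : (if i.castSucc ≤ (Fin.last n).castSucc
            then g ((Fin.last n).castSucc) - g ((Fin.last n).succ) else 0)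
          = g ((Fin.last n).castSucc) - g (Fin.last (n + 1)) := by
        rw [if_pos (Fin.castSucc_le_castSucc_iff.mpr (Fin.le_last i)), Fin.succ_last]
      have hmain : ∑ j : Fin n, (if i.castSucc ≤ (j.castSucc).castSucc
            then g ((j.castSucc).castSucc) - g ((j.castSucc).succ) else 0)
          = g (Fin.castSucc i) - g ((Fin.last n).castSucc) := by
        have := ih (fun p => g p.castSucc) i
        rw [← this]
        refine Finset.sum_congr rfl fun j _ => ?_
        simp only [Fin.castSucc_le_castSucc_iff, Fin.succ_castSucc]
      rw [hlast, hmain]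
      ring

lemma count_sum_eq {r k : ℕ} (lam : Fin (r + 1) → ℝ) (l : Fin k → Fin (r + 1)) :
    ∑ i : Fin k, lam (l i)
      = (k : ℝ) * lam (Fin.last r) + ∑ j : Fin r, (lam j.castSucc - lam j.succ) *
          ((Finset.univ.filter (fun i => l i ≤ j.castSucc)).card : ℝ) := by
  have h1 : ∀ i : Fin k, lam (l i) = lam (Fin.last r)
      + ∑ j : Fin r, (if l i ≤ j.castSucc then lam j.castSucc - lam j.succ else 0) := by
    intro i; rw [telescope_fin r lam (l i)]; ring
  rw [Finset.sum_congr rfl fun i _ => h1 i, Finset.sum_add_distrib, Finset.sum_const,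
    Finset.sum_comm]
  congr 1
  · simp [mul_comm]
  · refine Finset.sum_congr rfl fun j _ => ?_
    rw [← Finset.sum_filter, Finset.sum_const, nsmul_eq_mul, mul_comm]

lemma gram_det_pos {k : ℕ} (u : Fin k → E) (hu : LinearIndependent ℂ u) :
    0 < (Matrix.of fun i j : Fin k => (⟪u i, u j⟫ : ℂ)).det.re := by
  classical
  set F := span ℂ (Set.range u) with hF
  have hd : finrank ℂ F = k := by
    rw [hF, finrank_span_eq_card hu, Fintype.card_fin]
  let O : OrthonormalBasis (Fin k) ℂ F := (stdOrthonormalBasis ℂ F).reindex (finCongr hd)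
  let u' : Fin k → F := fun i => ⟨u i, subset_span (Set.mem_range_self i)⟩
  have hu' : LinearIndependent ℂ u' := by
    refine LinearIndependent.of_comp F.subtype ?_
    have : F.subtype ∘ u' = u := rfl
    rwa [this]
  let B : Matrix (Fin k) (Fin k) ℂ := Matrix.of fun p i => ⟪O p, u' i⟫
  have hGram : (Matrix.of fun i j : Fin k => (⟪u i, u j⟫ : ℂ)) = Bᴴ * B := by
    ext i j
    rw [Matrix.mul_apply]
    have : ∀ p, Bᴴ i p * B p j = ⟪u' i, O p⟫ * ⟪O p, u' j⟫ := by
      intro p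
      rw [Matrix.conjTranspose_apply]
      congr 1
      show star (⟪O p, u' i⟫ : ℂ) = _
      rw [← inner_conj_symm (u' i) (O p)]
      rfl
    rw [Finset.sum_congr rfl fun p _ => this p, O.sum_inner_mul_inner]
    exact (Submodule.coe_inner F (u' i) (u' j)).symm
  have hBdet : B.det ≠ 0 := by
    intro h0
    obtain ⟨c, hc0, hc⟩ := (Matrix.exists_mulVec_eq_zero_iff).mpr h0
    have hx : (∑ i, c i • u' i) = 0 := by
      have hcoord : ∀ p, ⟪O p, ∑ i, c i • u' i⟫ = (0 : ℂ) := by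
        intro p
        rw [inner_sum]
        have : ∀ i, ⟪O p, c i • u' i⟫ = B p i * c i := by
          intro i; rw [inner_smul_right, mul_comm]; rfl
        rw [Finset.sum_congr rfl fun i _ => this i]
        simpa [Matrix.mulVec, dotProduct] using congrFun hc p
      have := O.sum_repr' (∑ i, c i • u' i)
      rw [← this]
      rw [Finset.sum_congr rfl fun p _ => by rw [hcoord p]]
      simp
    have := Fintype.linearIndependent_iff.mp hu' c hx
    exact hc0 (funext this)
  rw [hGram, Matrix.det_mul, Matrix.det_conjTranspose]
  have : star B.det * B.det = (Complex.normSq B.det : ℂ) := by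
    rw [Complex.normSq_eq_conj_mul_self]; rfl
  rw [this, Complex.ofReal_re]
  exact Complex.normSq_pos.mpr hBdet

lemma tendsto_log_aux (μ β c : ℝ) (hβ : 0 < β) (hc : 0 < c) (h : ℝ → ℝ)
    (hh : Tendsto h atTop (nhds c)) :
    Tendsto (fun t => (1 / (2 * t)) * Real.log (β * (Real.exp (2 * t * μ) * h t)))
      atTop (nhds μ) := by
  have hhc : ∀ᶠ t in atTop, c / 2 < h t :=
    hh.eventually (eventually_gt_nhds (by linarith))
  have ht1 : ∀ᶠ t : ℝ in atTop, (1 : ℝ) ≤ t := eventually_ge_atTop 1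
  have hev : ∀ᶠ t in atTop, (1 / (2 * t)) * Real.log (β * (Real.exp (2 * t * μ) * h t))
      = μ + (Real.log β + Real.log (h t)) / (2 * t) := by
    filter_upwards [hhc, ht1] with t hht ht
    have htpos : (0 : ℝ) < t := lt_of_lt_of_le one_pos ht
    have hhtpos : 0 < h t := lt_trans (by linarith) hht
    rw [Real.log_mul (ne_of_gt hβ) (by positivity), Real.log_mul (by positivity) (ne_of_gt hhtpos),
      Real.log_exp]
    field_simp
    ring
  refine Tendsto.congr' (by filter_upwards [hev] with t h using h.symm) ?_
  have h2t : Tendsto (fun t : ℝ => 2 * t) atTop atTop :=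
    Tendsto.const_mul_atTop two_pos tendsto_id
  have hnum : Tendsto (fun t => Real.log β + Real.log (h t)) atTop
      (nhds (Real.log β + Real.log c)) :=
    tendsto_const_nhds.add (((Real.continuousAt_log (ne_of_gt hc)).tendsto).comp hh)
  have := hnum.div_atTop h2t
  have h3 := (tendsto_const_nhds (x := μ) (f := atTop (α := ℝ))).add this
  simpa using h3

lemma exists_change_matrix {k : ℕ} (v w : Fin k → E) (hv : LinearIndependent ℂ v)
    (hw : LinearIndependent ℂ w) (hspan : span ℂ (Set.range w) = span ℂ (Set.range v)) :
    ∃ N : Matrix (Fin k) (Fin k) ℂ, N.det ≠ 0 ∧ ∀ i, w i = ∑ p, N p i • v p := by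
  classical
  let bv : Basis (Fin k) ℂ (span ℂ (Set.range v)) := Basis.span hv
  let bw : Basis (Fin k) ℂ (span ℂ (Set.range v)) :=
    (Basis.span hw).map (LinearEquiv.ofEq _ _ hspan)
  refine ⟨bv.toMatrix bw, ?_, ?_⟩
  · have : Invertible (bv.toMatrix bw) := bv.invertibleToMatrix bw
    exact (Matrix.isUnit_det_of_invertible _).ne_zero
  · intro i
    have h := bv.sum_toMatrix_smul_self bw i
    have hcoe := congrArg (Submodule.subtype _) h
    rw [map_sum] at hcoe
    have hbw : (Submodule.subtype _) (bw i) = w i := by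
      show ((bw i : E)) = w i
      simp [bw, Basis.span_apply]
    rw [hbw] at hcoe
    rw [← hcoe]
    refine Finset.sum_congr rfl fun p _ => ?_
    simp [bv, Basis.span_apply]

lemma gram_conj {k : ℕ} (X : Fin k → E) (N : Matrix (Fin k) (Fin k) ℂ) :
    Matrix.of (fun i j : Fin k => (⟪∑ p, N p i • X p, ∑ q, N q j • X q⟫ : ℂ))
      = Nᴴ * Matrix.of (fun p q : Fin k => (⟪X p, X q⟫ : ℂ)) * N := by
  ext i j
  rw [Matrix.mul_apply]
  rw [Matrix.of_apply, sum_inner]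
  have h1 : ∀ p, (⟪N p i • X p, ∑ q, N q j • X q⟫ : ℂ)
      = star (N p i) * ∑ q, N q j * ⟪X p, X q⟫ := by
    intro p
    rw [inner_smul_left, inner_sum]
    congr 1
    exact Finset.sum_congr rfl fun q _ => by rw [inner_smul_right]
  rw [Finset.sum_congr rfl fun p _ => h1 p]
  have h2 : ∀ q, (Nᴴ * Matrix.of (fun p q : Fin k => (⟪X p, X q⟫ : ℂ))) i q * N q j
      = ∑ p, star (N p i) * (⟪X p, X q⟫ * N q j) := by
    intro q
    rw [Matrix.mul_apply, Finset.sum_mul]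
    refine Finset.sum_congr rfl fun p _ => ?_
    rw [Matrix.conjTranspose_apply, Matrix.of_apply]
    ring
  rw [Finset.sum_congr rfl fun q _ => h2 q, Finset.sum_comm]
  refine Finset.sum_congr rfl fun p _ => ?_
  rw [Finset.mul_sum]
  refine Finset.sum_congr rfl fun q _ => ?_
  ring

end Helpers

open Filter

/-- Let `A` be a self-adjoint endomorphism of a finite-dimensional complex
inner product space whose distinct eigenvalues are `lam 0 < lam 1 < … < lam r` (indexed by
`Fin (r+1)`), and for `j` let `E_j` be the sum of the eigenspaces for the eigenvalues
`lam 0, …, lam j`.  Let `v 0, …, v (k-1)` be linearly independent, spanning `π`, and let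
`G t` be the Gram matrix `G t i j = ⟪exp(tA) (v i), exp(tA) (v j)⟫`.  Then, as `t → +∞`,
`(1/(2t)) log det (G t)` converges to
`k·(lam r) + ∑_{j<r} (lam j − lam (j+1)) · dim (π ⊓ E_j)`. -/
theorem tendsto_log_det_gram_exp_smul
    {E : Type*} [NormedAddCommGroup E] [InnerProductSpace ℂ E] [FiniteDimensional ℂ E]
    (A : E →L[ℂ] E) (hA : IsSelfAdjoint A)
    (r : ℕ) (lam : Fin (r + 1) → ℝ) (hlam : StrictMono lam)
    (heig : ∀ j, Module.End.eigenspace (A : E →ₗ[ℂ] E) (lam j : ℂ) ≠ ⊥)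
    (hsup : (⨆ j, Module.End.eigenspace (A : E →ₗ[ℂ] E) (lam j : ℂ)) = ⊤)
    (k : ℕ) (v : Fin k → E) (hv : LinearIndependent ℂ v) :
    Tendsto (fun t : ℝ =>
        (1 / (2 * t)) * Real.log
          ((Matrix.of fun i j : Fin k =>
              (inner ℂ (NormedSpace.exp (t • A) (v i))
                (NormedSpace.exp (t • A) (v j)) : ℂ)).det.re))
      atTop
      (nhds ((k : ℝ) * lam (Fin.last r) +
        ∑ j : Fin r, (lam j.castSucc - lam j.succ) *
          (Module.finrank ℂ
            ↥(Submodule.span ℂ (Set.range v) ⊓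
              ⨆ i, ⨆ _ : i ≤ j.castSucc,
                Module.End.eigenspace (A : E →ₗ[ℂ] E) (lam i : ℂ)) : ℝ))) := by
  classical
  set V : Fin (r + 1) → Submodule ℂ E :=
    fun j => Module.End.eigenspace (A : E →ₗ[ℂ] E) (lam j : ℂ) with hV
  set Q : Fin (r + 1) → Submodule ℂ E :=
    fun j => Submodule.span ℂ (Set.range v) ⊓ ⨆ i, ⨆ _ : i ≤ j, V i with hQ
  have hQmono : Monotone Q := by
    intro a b hab
    refine inf_le_inf_left _ ?_
    exact iSup_mono fun i => iSup_le fun hia => le_iSup_of_le (hia.trans hab) (le_refl _)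
  obtain ⟨s, lv, hsind, hsspan, hsmem, hslast, hsP3⟩ := adapted_chain Q hQmono r le_rfl
  have hlastmk : (⟨r, by omega⟩ : Fin (r + 1)) = Fin.last r := rfl
  have hEtop : (⨆ i, ⨆ _ : i ≤ Fin.last r, V i) = ⊤ := by
    refine top_unique ?_
    rw [← hsup]
    exact iSup_mono fun i => le_iSup (fun _ : i ≤ Fin.last r => V i) (Fin.le_last i)
  have hQlast : Q (Fin.last r) = Submodule.span ℂ (Set.range v) := by
    rw [hQ]
    simp only [hEtop]
    exact inf_top_eq _
  have hsfin : s.Finite := hsind.setFinite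
  haveI := hsfin.fintype
  have hkcard : Fintype.card s = k := by
    have h1 : finrank ℂ (span ℂ (Set.range v)) = k := by
      rw [finrank_span_eq_card hv, Fintype.card_fin]
    have h2 : finrank ℂ (span ℂ s) = s.toFinset.card := finrank_span_set_eq_card hsind
    rw [hsspan, hlastmk, hQlast, h1, Set.toFinset_card] at h2
    omega
  let e : Fin k ≃ ↥s := (finCongr hkcard.symm).trans (Fintype.equivFin ↥s).symm
  set w : Fin k → E := fun i => ((e i : E)) with hw_def
  set l : Fin k → Fin (r + 1) := fun i => lv (w i) with hl_def
  have hw : LinearIndependent ℂ w := hsind.comp e e.injective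
  have hrange : Set.range w = s := by
    ext x
    constructor
    · rintro ⟨i, rfl⟩; exact (e i).2
    · intro hx; exact ⟨e.symm ⟨x, hx⟩, by simp [hw_def]⟩
  have hwspan : span ℂ (Set.range w) = span ℂ (Set.range v) := by
    rw [hrange, hsspan, hlastmk, hQlast]
  have hwQ : ∀ i, w i ∈ Q (l i) := fun i => hsmem _ (e i).2
  have hwEs : ∀ i, w i ∈ ⨆ p, ⨆ _ : p ≤ l i, V p := fun i => (hwQ i).2
  -- counting
  have hcount : ∀ j : Fin (r + 1),
      ((Finset.univ.filter (fun i => l i ≤ j)).card) = finrank ℂ (Q j) := by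
    intro j
    set I := Finset.univ.filter (fun i : Fin k => l i ≤ j) with hI
    have hind2 : LinearIndependent ℂ (fun i : ↥I => w i) :=
      hw.comp _ Subtype.val_injective
    have hsp : span ℂ (Set.range fun i : ↥I => w (i : Fin k)) = Q j := by
      apply le_antisymm
      · rw [span_le]
        rintro x ⟨i, rfl⟩
        have hi : l (i : Fin k) ≤ j := (Finset.mem_filter.mp i.2).2
        exact hQmono hi (hwQ i)
      · intro x hx
        have h3 := hsP3 j (by exact Fin.le_last j) hx
        have hsub : {x ∈ s | lv x ≤ j} ⊆ Set.range (fun i : ↥I => w (i : Fin k)) := by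
          rintro x ⟨hxs, hxlv⟩
          refine ⟨⟨e.symm ⟨x, hxs⟩, ?_⟩, ?_⟩
          · rw [hI, Finset.mem_filter]
            refine ⟨Finset.mem_univ _, ?_⟩
            show lv (w (e.symm ⟨x, hxs⟩)) ≤ j
            have : w (e.symm ⟨x, hxs⟩) = x := by simp [hw_def]
            rw [this]; exact hxlv
          · simp [hw_def]
        exact span_mono hsub h3
    rw [← hsp, finrank_span_eq_card hind2, Fintype.card_coe]
  -- decomposition
  choose y hy1 hy2 hy3 using fun i => mem_biSup_decomp V (l i) (w i) (hwEs i)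
  set u : Fin k → E := fun i => y i (l i) with hu_def
  have hindV : iSupIndep V := by
    have h0 := Module.End.eigenspaces_iSupIndep (A : E →ₗ[ℂ] E)
    have hinj : Function.Injective (fun j : Fin (r + 1) => (lam j : ℂ)) := by
      intro a b hab
      exact hlam.injective (Complex.ofReal_injective hab)
    exact h0.comp hinj
  -- linear independence of the top components
  have hu : LinearIndependent ℂ u := by
    rw [Fintype.linearIndependent_iff]
    intro g hg
    have hfib : ∀ j, ∑ i ∈ Finset.univ.filter (fun i => l i = j), g i • u i = 0 := by
      refine indep_sum_eq_zero hindV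
        (fun j => ∑ i ∈ Finset.univ.filter (fun i => l i = j), g i • u i) ?_ ?_
      · intro j
        refine Submodule.sum_mem _ fun i hi => Submodule.smul_mem _ _ ?_
        have hij : l i = j := (Finset.mem_filter.mp hi).2
        rw [← hij]
        exact hy1 i (l i)
      · show (∑ j, ∑ i ∈ Finset.univ.filter (fun i => l i = j), g i • u i) = 0
        rw [← hg]
        exact Finset.sum_fiberwise Finset.univ l (fun i => g i • u i)
    have key : ∀ j, ∀ i ∈ Finset.univ.filter (fun i : Fin k => l i = j), g i = 0 := by
      intro j
      set Fj := Finset.univ.filter (fun i : Fin k => l i = j) with hFj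
      set Lower := Finset.univ.filter (fun i : Fin k => l i < j) with hLower
      have hxdiff : ∑ i ∈ Fj, g i • w i = ∑ i ∈ Fj, g i • (w i - u i) := by
        have : ∀ i ∈ Fj, g i • (w i - u i) = g i • w i - g i • u i :=
          fun i _ => smul_sub _ _ _
        rw [Finset.sum_congr rfl this, Finset.sum_sub_distrib, hfib j, sub_zero]
      have hxlow : (∑ i ∈ Fj, g i • w i) ∈ span ℂ (w '' (Lower : Set (Fin k))) := by
        rcases Fin.eq_zero_or_eq_succ j with hj0 | ⟨j', hj'⟩
        · have hwu : ∀ i ∈ Fj, w i - u i = 0 := by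
            intro i hi
            have hij : l i = j := (Finset.mem_filter.mp hi).2
            have hwi : w i = y i (l i) := by
              rw [← hy3 i]
              refine Finset.sum_eq_single (l i) ?_ ?_
              · intro p _ hp
                refine hy2 i p ?_
                rw [hij, hj0]
                intro hle
                exact hp (by rw [hij, hj0]; exact Fin.le_zero_iff.mp hle)
              · intro h; exact absurd (Finset.mem_univ _) h
            rw [hwi]
            exact sub_self _
          rw [hxdiff, Finset.sum_congr rfl fun i hi => by rw [hwu i hi, smul_zero]]
          simp
        · have hxQ : (∑ i ∈ Fj, g i • w i) ∈ Q j'.castSucc := by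
            constructor
            · exact Submodule.sum_mem _ fun i _ => Submodule.smul_mem _ _ (hwQ i).1
            · show (∑ i ∈ Fj, g i • w i) ∈ ⨆ p, ⨆ _ : p ≤ j'.castSucc, V p
              rw [hxdiff]
              refine Submodule.sum_mem _ fun i hi => Submodule.smul_mem _ _ ?_
              have hij : l i = j := (Finset.mem_filter.mp hi).2
              have hwu : w i - u i = ∑ p ∈ Finset.univ.erase (l i), y i p := by
                rw [Finset.sum_erase_eq_sub (Finset.mem_univ _), hy3 i]
              rw [hwu]
              refine Submodule.sum_mem _ fun p hp => ?_
              have hpne : p ≠ l i := Finset.ne_of_mem_erase hp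
              by_cases hple : p ≤ l i
              · have hplt : p ≤ j'.castSucc := by
                  rw [Fin.le_castSucc_iff, ← hj']
                  exact lt_of_le_of_ne (by rw [← hij]; exact hple) (by rw [← hij]; exact hpne)
                exact Submodule.mem_iSup_of_mem p (Submodule.mem_iSup_of_mem hplt (hy1 i p))
              · rw [hy2 i p hple]
                exact zero_mem _
          have h3 := hsP3 j'.castSucc (Fin.le_last _) hxQ
          have hsub : {z ∈ s | lv z ≤ j'.castSucc} ⊆ w '' (Lower : Set (Fin k)) := by
            rintro z ⟨hzs, hzlv⟩
            refine ⟨e.symm ⟨z, hzs⟩, ?_, by simp [hw_def]⟩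
            have hwz : w (e.symm ⟨z, hzs⟩) = z := by simp [hw_def]
            rw [Finset.mem_coe, hLower, Finset.mem_filter]
            refine ⟨Finset.mem_univ _, ?_⟩
            show l _ < j
            rw [hl_def]
            simp only []
            rw [hwz, hj']
            exact Fin.le_castSucc_iff.mp hzlv
          exact span_mono hsub h3
      rw [Set.image_eq_range] at hxlow
      rw [mem_span_range_iff_exists_fun] at hxlow
      obtain ⟨cc, hcc⟩ := hxlow
      set G : Fin k → ℂ := fun i =>
        (if i ∈ Fj then g i else 0) - (if h : i ∈ Lower then cc ⟨i, h⟩ else 0) with hG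
      have hsum1 : ∑ i, (if i ∈ Fj then g i else 0) • w i = ∑ i ∈ Fj, g i • w i := by
        rw [Finset.sum_congr rfl (fun i (_ : i ∈ Finset.univ) =>
          show (if i ∈ Fj then g i else 0) • w i = if i ∈ Fj then g i • w i else (0 : E) by
            split_ifs <;> simp), ← Finset.sum_filter, Finset.filter_univ_mem]
      have hsum2 : ∑ i, (if h : i ∈ Lower then cc ⟨i, h⟩ else 0) • w i
          = ∑ i ∈ Fj, g i • w i := by
        have e1 : ∀ i ∈ Finset.univ, (if h : i ∈ Lower then cc ⟨i, h⟩ else 0) • w i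
            = if h : i ∈ Lower then cc ⟨i, h⟩ • w i else 0 := by
          intro i _
          by_cases h : i ∈ Lower <;> simp [h]
        rw [Finset.sum_congr rfl e1]
        rw [← Finset.sum_subset (Finset.subset_univ Lower)
          (fun i _ hi => by rw [dif_neg hi])]
        rw [← Finset.sum_attach Lower (fun i => if h : i ∈ Lower then cc ⟨i, h⟩ • w i else 0)]
        have e2 : ∀ i ∈ Lower.attach,
            (if h : (i : Fin k) ∈ Lower then cc ⟨(i : Fin k), h⟩ • w (i : Fin k) else 0)
            = cc i • w (i : Fin k) := by
          intro i _
          rw [dif_pos i.2, Subtype.coe_eta]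
        rw [Finset.sum_congr rfl e2]
        rw [← hcc]
        rw [← Finset.univ_eq_attach]
        rfl
      have hGsum : ∑ i, G i • w i = 0 := by
        have : ∀ i ∈ Finset.univ, G i • w i
            = (if i ∈ Fj then g i else 0) • w i
              - (if h : i ∈ Lower then cc ⟨i, h⟩ else 0) • w i := by
          intro i _
          rw [hG]
          exact sub_smul _ _ _
        rw [Finset.sum_congr rfl this, Finset.sum_sub_distrib, hsum1, hsum2, sub_self]
      have hG0 := Fintype.linearIndependent_iff.mp hw G hGsum
      intro i hi
      have hiF : i ∈ Fj := hi
      have hiL : i ∉ Lower := by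
        rw [hLower, Finset.mem_filter]
        rintro ⟨-, hlt⟩
        rw [(Finset.mem_filter.mp hiF).2] at hlt
        exact lt_irrefl _ hlt
      have := hG0 i
      rw [hG] at this
      simpa [hiF, hiL] using this
    intro i
    exact key (l i) i (by simp)
  -- the weight
  set μ : ℝ := ∑ i, lam (l i) with hμ
  -- final value identity
  have hval : (k : ℝ) * lam (Fin.last r) +
      ∑ j : Fin r, (lam j.castSucc - lam j.succ) *
        (Module.finrank ℂ
          ↥(Submodule.span ℂ (Set.range v) ⊓
            ⨆ i, ⨆ _ : i ≤ j.castSucc,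
              Module.End.eigenspace (A : E →ₗ[ℂ] E) (lam i : ℂ)) : ℝ) = μ := by
    rw [hμ, count_sum_eq lam l]
    congr 1
    refine Finset.sum_congr rfl fun j _ => ?_
    congr 1
    exact_mod_cast congrArg (Nat.cast (R := ℝ)) (hcount j.castSucc).symm
  rw [hval]
  -- change of basis
  obtain ⟨N, hNdet, hNw⟩ := exists_change_matrix v w hv hw hwspan
  set β : ℝ := (Complex.normSq N.det)⁻¹ with hβ
  have hβpos : 0 < β := inv_pos.mpr (Complex.normSq_pos.mpr hNdet)
  -- renormalized vectors and Gram matrix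
  set z : ℝ → Fin k → E := fun t i =>
    ∑ p, (Real.exp (t * (lam p - lam (l i))) : ℂ) • y i p with hz
  set H : ℝ → Matrix (Fin k) (Fin k) ℂ :=
    fun t => Matrix.of fun i j => (inner ℂ (z t i) (z t j) : ℂ) with hH
  have hexpw : ∀ (t : ℝ) (i : Fin k), NormedSpace.exp (t • A) (w i)
      = (Real.exp (t * lam (l i)) : ℂ) • z t i := by
    intro t i
    rw [← hy3 i, map_sum, hz]
    simp only []
    rw [Finset.smul_sum]
    refine Finset.sum_congr rfl fun p _ => ?_
    rw [exp_apply_eigen A t (lam p) (y i p) (hy1 i p), smul_smul, ← Complex.ofReal_mul,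
      ← Real.exp_add]
    congr 2
    ring
  -- limits of z
  have hzlim : ∀ i, Tendsto (fun t => z t i) atTop (nhds (u i)) := by
    intro i
    have hterm : ∀ p : Fin (r + 1),
        Tendsto (fun t => (Real.exp (t * (lam p - lam (l i))) : ℂ) • y i p)
          atTop (nhds (if p = l i then u i else 0)) := by
      intro p
      by_cases hp : p = l i
      · simp only [hp, sub_self, mul_zero, Real.exp_zero, Complex.ofReal_one, one_smul,
          if_pos]
        exact tendsto_const_nhds
      · rw [if_neg hp]
        by_cases hple : p ≤ l i
        · have hlt : lam p - lam (l i) < 0 :=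
            sub_neg.mpr (hlam (lt_of_le_of_ne hple hp))
          have h1 : Tendsto (fun t : ℝ => t * (lam p - lam (l i))) atTop atBot :=
            Tendsto.atTop_mul_const_of_neg hlt tendsto_id
          have h2 := Real.tendsto_exp_atBot.comp h1
          have h3 : Tendsto (fun t : ℝ => ((Real.exp (t * (lam p - lam (l i)))) : ℂ))
              atTop (nhds ((0 : ℝ) : ℂ)) :=
            (Complex.continuous_ofReal.tendsto _).comp h2
          have h4 := h3.smul_const (y i p)
          simpa using h4
        · rw [hy2 i p hple]
          simpa using tendsto_const_nhds (x := (0 : E)) (f := (atTop : Filter ℝ))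
    have hsum := tendsto_finset_sum Finset.univ (fun p (_ : p ∈ Finset.univ) => hterm p)
    have hval2 : (∑ p, if p = l i then u i else 0) = u i := by simp
    rw [hval2] at hsum
    exact hsum
  -- limit of the determinant of H
  have hmat : Tendsto H atTop
      (nhds (Matrix.of fun i j : Fin k => (inner ℂ (u i) (u j) : ℂ))) := by
    refine tendsto_pi_nhds.mpr ?_
    intro i
    rw [tendsto_pi_nhds]
    intro j
    exact (hzlim i).inner (hzlim j)
  set c0 : ℝ := (Matrix.of fun i j : Fin k => (inner ℂ (u i) (u j) : ℂ)).det.re with hc0def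
  have hHlim : Tendsto (fun t => (H t).det.re) atTop (nhds c0) := by
    have hdet := ((continuous_id.matrix_det).tendsto _).comp hmat
    exact (Complex.continuous_re.tendsto _).comp hdet
  have hc0 : 0 < c0 := gram_det_pos u hu
  -- pointwise formula for the determinant
  have hform : ∀ t : ℝ, (Matrix.of fun i j : Fin k =>
      (inner ℂ (NormedSpace.exp (t • A) (v i)) (NormedSpace.exp (t • A) (v j)) : ℂ)).det.re
      = β * (Real.exp (2 * t * μ) * (H t).det.re) := by
    intro t
    set Gv : Matrix (Fin k) (Fin k) ℂ := Matrix.of fun i j : Fin k =>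
      (inner ℂ (NormedSpace.exp (t • A) (v i)) (NormedSpace.exp (t • A) (v j)) : ℂ) with hGv
    set a : Fin k → ℂ := fun i => ((Real.exp (t * lam (l i))) : ℂ) with ha
    have hexpwv : ∀ i, NormedSpace.exp (t • A) (w i)
        = ∑ p, N p i • NormedSpace.exp (t • A) (v p) := by
      intro i
      rw [hNw i, map_sum]
      exact Finset.sum_congr rfl fun p _ => by rw [_root_.map_smul]
    have hGw : Matrix.of (fun i j : Fin k =>
        (inner ℂ (NormedSpace.exp (t • A) (w i)) (NormedSpace.exp (t • A) (w j)) : ℂ))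
        = Nᴴ * Gv * N := by
      have hgc := gram_conj (fun p => NormedSpace.exp (t • A) (v p)) N
      rw [← hgc]
      ext i j
      rw [Matrix.of_apply, Matrix.of_apply, hexpwv i, hexpwv j]
    have hGw2 : Matrix.of (fun i j : Fin k =>
        (inner ℂ (NormedSpace.exp (t • A) (w i)) (NormedSpace.exp (t • A) (w j)) : ℂ))
        = Matrix.diagonal a * H t * Matrix.diagonal a := by
      ext i j
      rw [Matrix.of_apply, Matrix.mul_diagonal, Matrix.diagonal_mul, hexpw t i, hexpw t j,
        inner_smul_left, inner_smul_right, Complex.conj_ofReal]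
      rw [show (H t) i j = (inner ℂ (z t i) (z t j) : ℂ) from rfl]
      ring
    have hprod : (∏ i, a i) = ((Real.exp (t * μ)) : ℂ) := by
      rw [ha, hμ]
      rw [← Complex.ofReal_prod]
      congr 1
      rw [← Real.exp_sum]
      congr 1
      rw [Finset.mul_sum]
    have hdetEq : (Nᴴ * Gv * N).det = (Matrix.diagonal a * H t * Matrix.diagonal a).det := by
      rw [← hGw, hGw2]
    rw [Matrix.det_mul, Matrix.det_mul, Matrix.det_mul, Matrix.det_mul,
      Matrix.det_conjTranspose, Matrix.det_diagonal, hprod] at hdetEq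
    -- hdetEq : star N.det * Gv.det * N.det = exp(tμ) * det H * exp(tμ)
    have hstar : star N.det * N.det = ((Complex.normSq N.det : ℝ) : ℂ) := by
      rw [Complex.normSq_eq_conj_mul_self]
      rfl
    have hGvdet : Gv.det = ((β * Real.exp (2 * t * μ) : ℝ) : ℂ) * (H t).det := by
      have hne : ((Complex.normSq N.det : ℝ) : ℂ) ≠ 0 := by
        simp only [ne_eq, Complex.ofReal_eq_zero]
        exact ne_of_gt (Complex.normSq_pos.mpr hNdet)
      have h5 : ((Complex.normSq N.det : ℝ) : ℂ) * Gv.det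
          = ((Real.exp (t * μ)) : ℂ) * (H t).det * ((Real.exp (t * μ)) : ℂ) := by
        rw [← hstar, ← hdetEq]
        ring
      have h6 := congrArg (fun x => (((Complex.normSq N.det : ℝ) : ℂ))⁻¹ * x) h5
      beta_reduce at h6
      rw [← mul_assoc, inv_mul_cancel₀ hne, one_mul] at h6
      rw [h6, hβ]
      have hexp2 : Real.exp (2 * t * μ) = Real.exp (t * μ) * Real.exp (t * μ) := by
        rw [← Real.exp_add]
        congr 1
        ring
      rw [hexp2, Complex.ofReal_mul, Complex.ofReal_mul, Complex.ofReal_inv]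
      ring
    rw [hGv] at hGvdet
    rw [hGvdet, Complex.re_ofReal_mul]
    ring
  -- conclusion
  have hfinal := tendsto_log_aux μ β c0 hβpos hc0 (fun t => (H t).det.re) hHlim
  exact hfinal.congr fun t => by rw [← hform t]
end

section
/- Let E be a finite-dimensional complex inner product space, A a self-adjoint (Hermitian) linear endomorphism of E, and x ∈ E. Then the function t ↦ ⟪exp(tA) x, A exp(tA) x⟫ (which is real-valued) is monotone nondecreasing on ℝ; moreover, if its values at t = 0 and t = 1 coincide, i.e. ⟪exp(A) x, A exp(A) x⟫ = ⟪x, A x⟫, then A x = 0 (and hence exp(tA) x = x for all t). -/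
open NormedSpace

section Aux
variable {E : Type*} [NormedAddCommGroup E] [InnerProductSpace ℂ E] [FiniteDimensional ℂ E]

private lemma comm_exp (A : E →L[ℂ] E) (s : ℝ) : Commute A (exp (s • A)) := by
  exact ((Commute.refl A).smul_right s).exp_right

private lemma hasDerivAt_y (A : E →L[ℂ] E) (x : E) (t : ℝ) :
    HasDerivAt (fun u : ℝ => exp (u • A) x) (A (exp (t • A) x)) t := by
  have h1 : HasDerivAt (fun u : ℝ => exp (u • A)) (exp (t • A) * A) t := by
    have := hasDerivAt_exp_smul_const (𝕂 := ℝ) A t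
    exact this
  let π : (E →L[ℂ] E) →L[ℝ] E := (ContinuousLinearMap.apply ℂ E x).restrictScalars ℝ
  have h2 : HasDerivAt (fun u : ℝ => π (exp (u • A))) (π (exp (t • A) * A)) t :=
    π.hasFDerivAt.comp_hasDerivAt t h1
  have h3 : π (exp (t • A) * A) = A (exp (t • A) x) := by
    show (exp (t • A) * A) x = A (exp (t • A) x)
    rw [← (comm_exp A t).eq]; rfl
  rwa [h3] at h2

private lemma hasDerivAt_f (A : E →L[ℂ] E) (hA : IsSelfAdjoint A) (x : E) (t : ℝ) :
    HasDerivAt (fun u : ℝ =>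
      (inner ℂ (exp (u • A) x) (A (exp (u • A) x)) : ℂ).re)
      (2 * ‖A (exp (t • A) x)‖ ^ 2) t := by
  set y : ℝ → E := fun u => exp (u • A) x with hy
  have hyd : ∀ u, HasDerivAt y (A (y u)) u := hasDerivAt_y A x
  have hAy : ∀ u, HasDerivAt (fun u => A (y u)) (A (A (y u))) u := fun u =>
    (A.restrictScalars ℝ).hasFDerivAt.comp_hasDerivAt u (hyd u)
  have hin : HasDerivAt (fun u => (inner ℂ (y u) (A (y u)) : ℂ))
      (inner ℂ (y t) (A (A (y t))) + inner ℂ (A (y t)) (A (y t))) t :=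
    (hyd t).inner ℂ (hAy t)
  have hre := Complex.reCLM.hasFDerivAt.comp_hasDerivAt t hin
  refine hre.congr_deriv ?_
  have hsa : (inner ℂ (y t) (A (A (y t))) : ℂ) = inner ℂ (A (y t)) (A (y t)) := by
    have := hA.isSymmetric (y t) (A (y t))
    simpa using this.symm
  simp only [Function.comp, Complex.reCLM_apply, hsa, Complex.add_re]
  rw [show ((inner ℂ (A (y t)) (A (y t)) : ℂ)).re = ‖A (y t)‖ ^ 2 from by
    simpa using (inner_self_eq_norm_sq (𝕜 := ℂ) (A (y t)))]
  ring
end Aux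

/-- For a self-adjoint endomorphism `A` of a finite-dimensional complex inner
product space and `x ∈ E`, the function `t ↦ ⟪exp(tA) x, A exp(tA) x⟫` is monotone
nondecreasing on `ℝ`; moreover if its values at `t = 1` and `t = 0` coincide, then `A x = 0`
(and hence `exp(tA) x = x` for all `t`). -/
theorem monotone_inner_exp_smul_selfAdjoint
    {E : Type*} [NormedAddCommGroup E] [InnerProductSpace ℂ E] [FiniteDimensional ℂ E]
    (A : E →L[ℂ] E) (hA : IsSelfAdjoint A) (x : E) :
    Monotone (fun t : ℝ =>
      (inner ℂ (NormedSpace.exp (t • A) x) (A (NormedSpace.exp (t • A) x)) : ℂ).re) ∧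
    ((inner ℂ (NormedSpace.exp ((1 : ℝ) • A) x)
          (A (NormedSpace.exp ((1 : ℝ) • A) x)) : ℂ).re =
        (inner ℂ (NormedSpace.exp ((0 : ℝ) • A) x)
          (A (NormedSpace.exp ((0 : ℝ) • A) x)) : ℂ).re →
      A x = 0 ∧ ∀ t : ℝ, NormedSpace.exp (t • A) x = x) := by
  set f : ℝ → ℝ := fun t =>
    (inner ℂ (exp (t • A) x) (A (exp (t • A) x)) : ℂ).re with hf
  have hfd := hasDerivAt_f A hA x
  have hmono : Monotone f := by
    apply monotone_of_deriv_nonneg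
    · exact fun t => (hfd t).differentiableAt
    · intro t
      rw [(hfd t).deriv]
      positivity
  refine ⟨hmono, fun heq => ?_⟩
  -- f is constant on [0,1]
  have h10 : f 1 = f 0 := heq
  have hconst : ∀ t ∈ Set.Icc (0:ℝ) 1, f t = f 0 := fun t ht =>
    le_antisymm (h10 ▸ hmono ht.2) (hmono ht.1)
  -- derivative of f at 1/2 is 0
  have hev : f =ᶠ[nhds (1/2 : ℝ)] fun _ => f 0 := by
    filter_upwards [Icc_mem_nhds (by norm_num : (0:ℝ) < 1/2) (by norm_num : (1/2:ℝ) < 1)] with t ht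
      using hconst t ht
  have h0 : HasDerivAt f 0 (1/2) := (hasDerivAt_const _ (f 0)).congr_of_eventuallyEq hev
  have hz : (2 : ℝ) * ‖A (exp ((1/2 : ℝ) • A) x)‖ ^ 2 = 0 := (hfd (1/2)).unique h0
  have hAy : A (exp ((1/2 : ℝ) • A) x) = 0 := by
    have : ‖A (exp ((1/2 : ℝ) • A) x)‖ = 0 := by nlinarith [sq_nonneg ‖A (exp ((1/2:ℝ) • A) x)‖]
    simpa using this
  have hinv : exp ((-(1/2) : ℝ) • A) * exp ((1/2 : ℝ) • A) = 1 := by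
    let +nondep : NormedAlgebra ℚ (E →L[ℂ] E) := .restrictScalars ℚ ℂ (E →L[ℂ] E)
    rw [← exp_add_of_commute]
    · norm_num
    · exact ((Commute.refl A).smul_left _).smul_right _
  have hAx : A x = 0 := by
    have : A x = exp ((-(1/2) : ℝ) • A) (A (exp ((1/2 : ℝ) • A) x)) := by
      have hc := (comm_exp A (-(1/2))).eq
      calc A x = A ((exp ((-(1/2) : ℝ) • A) * exp ((1/2 : ℝ) • A)) x) := by rw [hinv]; rfl
        _ = (A * exp ((-(1/2) : ℝ) • A)) (exp ((1/2 : ℝ) • A) x) := rfl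
        _ = (exp ((-(1/2) : ℝ) • A) * A) (exp ((1/2 : ℝ) • A) x) := by rw [hc]
        _ = exp ((-(1/2) : ℝ) • A) (A (exp ((1/2 : ℝ) • A) x)) := rfl
    rw [this, hAy, map_zero]
  refine ⟨hAx, fun t => ?_⟩
  have hgz : ∀ u : ℝ, HasDerivAt (fun s : ℝ => exp (s • A) x) 0 u := by
    intro u
    have := hasDerivAt_y A x u
    have h2 : A (exp (u • A) x) = 0 := by
      have : A (exp (u • A) x) = exp (u • A) (A x) := by
        have := (comm_exp A u).eq
        calc A (exp (u • A) x) = (A * exp (u • A)) x := rfl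
          _ = (exp (u • A) * A) x := by rw [this]
          _ = exp (u • A) (A x) := rfl
      rw [this, hAx, map_zero]
    rwa [h2] at this
  have := is_const_of_deriv_eq_zero (f := fun s : ℝ => exp (s • A) x)
    (fun u => (hgz u).differentiableAt) (fun u => (hgz u).deriv) t 0
  simpa using this
end

section
/- Let E be a finite-dimensional complex inner product space, A a self-adjoint (Hermitian) linear endomorphism of E, and x ∈ E a nonzero vector. Then the Rayleigh quotient function t ↦ ⟪exp(tA) x, A exp(tA) x⟫ / ‖exp(tA) x‖² is monotone nondecreasing on ℝ. -/
open NormedSpace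

/-- For a self-adjoint endomorphism `A` of a finite-dimensional complex inner
product space and a nonzero vector `x`, the Rayleigh quotient
`t ↦ ⟪exp(tA) x, A exp(tA) x⟫ / ‖exp(tA) x‖²` is monotone nondecreasing on `ℝ`. -/
theorem monotone_rayleigh_exp_smul_selfAdjoint
    {E : Type*} [NormedAddCommGroup E] [InnerProductSpace ℂ E] [FiniteDimensional ℂ E]
    (A : E →L[ℂ] E) (hA : IsSelfAdjoint A) (x : E) (hx : x ≠ 0) :
    Monotone (fun t : ℝ =>
      (inner ℂ (NormedSpace.exp (t • A) x) (A (NormedSpace.exp (t • A) x)) : ℂ).re /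
        ‖NormedSpace.exp (t • A) x‖ ^ 2) := by
  have hexp : (exp : (E →L[ℂ] E) → (E →L[ℂ] E)) = exp := rfl
  set u : ℝ → E := fun t => exp (t • A) x with hudef
  have hsym : ∀ y z : E, (inner ℂ (A y) z : ℂ) = inner ℂ y (A z) := by
    intro y z
    nth_rewrite 1 [← hA.adjoint_eq]
    exact ContinuousLinearMap.adjoint_inner_left A z y
  have hu_ne : ∀ t, u t ≠ 0 := by
    intro t h
    apply hx
    have h1 : exp (-(t • A)) * exp (t • A) = 1 := by
      rw [← exp_add_of_commute_of_mem_ball (𝕂 := ℂ) ((Commute.refl (t • A)).neg_left) ((expSeries_radius_eq_top ℂ (E →L[ℂ] E)).symm ▸ edist_lt_top _ _) ((expSeries_radius_eq_top ℂ (E →L[ℂ] E)).symm ▸ edist_lt_top _ _)]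
      simp [exp_zero]
    have : x = exp (-(t • A)) (u t) := by
      conv_lhs => rw [show x = (1 : E →L[ℂ] E) x from rfl, ← h1]
      rfl
    rw [this, h, map_zero]
  have hnorm : ∀ t, (0 : ℝ) < ‖u t‖ := fun t => norm_pos_iff.2 (hu_ne t)
  have hU : ∀ t : ℝ, HasDerivAt (fun s : ℝ => exp (s • A)) (exp (t • A) * A) t := by
    intro t
    exact hasDerivAt_exp_smul_const A t
  have hu' : ∀ t, HasDerivAt u (A (u t)) t := by
    intro t
    have hc : Commute A (exp (t • A)) := (((Commute.refl A).smul_right t).exp_right)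
    have key : (exp (t • A) * A) x = A (u t) := by
      rw [← hc.eq]; rfl
    have := ((ContinuousLinearMap.apply ℂ E x).restrictScalars ℝ).hasFDerivAt.comp_hasDerivAt t (hU t)
    exact (by simpa [key] using this : HasDerivAt (⇑((ContinuousLinearMap.apply ℂ E) x) ∘ fun s => exp (s • A)) (A (u t)) t)
  have hAu : ∀ t, HasDerivAt (fun s => A (u s)) (A (A (u t))) t := fun t =>
    (A.restrictScalars ℝ).hasFDerivAt.comp_hasDerivAt t (hu' t)
  set g : ℝ → ℝ := fun t => (inner ℂ (u t) (A (u t)) : ℂ).re with hgdef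
  set h : ℝ → ℝ := fun t => ‖u t‖ ^ 2 with hhdef
  have hg : ∀ t, HasDerivAt g (2 * ‖A (u t)‖ ^ 2) t := by
    intro t
    have h1 : HasDerivAt (fun s => (inner ℂ (u s) (A (u s)) : ℂ))
        ((inner ℂ (u t) (A (A (u t))) : ℂ) + inner ℂ (A (u t)) (A (u t))) t :=
      (hu' t).inner ℂ (hAu t)
    have h2 := Complex.reCLM.hasFDerivAt.comp_hasDerivAt t h1
    have h3 : ((inner ℂ (u t) (A (A (u t))) : ℂ) + inner ℂ (A (u t)) (A (u t))).re
        = 2 * ‖A (u t)‖ ^ 2 := by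
      rw [← hsym (u t) (A (u t))]
      have h4 : (inner ℂ (A (u t)) (A (u t)) : ℂ).re = ‖A (u t)‖ ^ 2 := by
        simpa using inner_self_eq_norm_sq (𝕜 := ℂ) (A (u t))
      rw [Complex.add_re, h4]; ring
    exact h2.congr_deriv (by rw [Complex.reCLM_apply]; exact h3)
  have hh : ∀ t, HasDerivAt h (2 * g t) t := by
    intro t
    have h1 : HasDerivAt (fun s => (inner ℂ (u s) (u s) : ℂ))
        ((inner ℂ (u t) (A (u t)) : ℂ) + inner ℂ (A (u t)) (u t)) t :=
      (hu' t).inner ℂ (hu' t)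
    have h2 := Complex.reCLM.hasFDerivAt.comp_hasDerivAt t h1
    have heq : h = fun s => (inner ℂ (u s) (u s) : ℂ).re := by
      funext s
      simpa using (inner_self_eq_norm_sq (𝕜 := ℂ) (u s)).symm
    have hconj : (inner ℂ (A (u t)) (u t) : ℂ) = starRingEnd ℂ (inner ℂ (u t) (A (u t)) : ℂ) :=
      (inner_conj_symm _ _).symm
    have h3 : ((inner ℂ (u t) (A (u t)) : ℂ) + inner ℂ (A (u t)) (u t)).re = 2 * g t := by
      rw [hconj, Complex.add_re, Complex.conj_re]; simp [hgdef]; ring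
    rw [heq]
    exact h2.congr_deriv (by rw [Complex.reCLM_apply]; exact h3)
  have hcs : ∀ t, |g t| ≤ ‖u t‖ * ‖A (u t)‖ := by
    intro t
    refine le_trans ?_ (norm_inner_le_norm (𝕜 := ℂ) (u t) (A (u t)))
    simpa using Complex.abs_re_le_norm (inner ℂ (u t) (A (u t)) : ℂ)
  refine monotone_of_hasDerivAt_nonneg
    (f' := fun t => (2 * ‖A (u t)‖ ^ 2 * h t - g t * (2 * g t)) / h t ^ 2)
    (fun t => (hg t).div (hh t) (pow_ne_zero 2 (hnorm t).ne')) ?_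
  intro t
  refine div_nonneg ?_ (sq_nonneg _)
  have hht : h t = ‖u t‖ ^ 2 := rfl
  nlinarith [hcs t, abs_nonneg (g t), norm_nonneg (u t), norm_nonneg (A (u t)), sq_abs (g t)]
end
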